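/- arXiv:2002.10741 — 5 statements merged into one kernel-verified Lean document; each statement's English description precedes it below -/
import Mathlib

section
/- Let d and c be integers with 2 ≤ c < d, and let E = {X_{t(i)} X_{s(i)} : 1 ≤ i ≤ r} be a family of two-letter words given by pairwise distinct pairs with 1 ≤ s(i) ≤ c < t(i) ≤ d. Suppose i₀, j₀ are indices with 2 ≤ i₀ ≤ c < j₀ ≤ d such that (i₀, j₀) is not among the pairs (s(i), t(i)). Then the family E ∪ { X_{j₀} X_{i₀}^n X_1 : n ∈ ℤ_{>0} } (where X_{j₀} X_{i₀}^n X_1 denotes the word consisting of the letter X_{j₀}, followed by n copies of the letter X_{i₀}, followed by the letter X_1) is combinatorially free. -/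
/-- A family of pairwise distinct words (modelled as a set of words) is
*combinatorially free* if (i) no word of the family is a factor (submonomial) of
another word of the family, and (ii) for any two words `w, w'` of the family, no
nonempty proper suffix of `w` equals a nonempty proper prefix of `w'`. -/
def CombFreeSet {α : Type*} (F : Set (List α)) : Prop :=
  (∀ u ∈ F, ∀ w ∈ F, u ≠ w → ¬ u <:+: w) ∧
  (∀ w ∈ F, ∀ w' ∈ F, ∀ s : List α,
      s ≠ [] → s <:+ w → s ≠ w → s <+: w' → s ≠ w' → False)

/-- Let `2 ≤ c < d`, let `E = {X_{t i} X_{s i}}` be given by pairwise distinct pairs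
with `1 ≤ s i ≤ c < t i ≤ d`, and let `2 ≤ i₀ ≤ c < j₀ ≤ d` with `(i₀, j₀)` not among
the pairs `(s i, t i)`.  Then `E ∪ { X_{j₀} X_{i₀}^n X_1 : n ≥ 1 }` is combinatorially
free. -/
theorem stmt_1 (d c r : ℕ) (hc : 2 ≤ c) (hcd : c < d)
    (s t : Fin r → ℕ)
    (hs : ∀ i, 1 ≤ s i ∧ s i ≤ c)
    (ht : ∀ i, c < t i ∧ t i ≤ d)
    (hdist : Function.Injective fun i => (s i, t i))
    (i₀ j₀ : ℕ) (hi₀ : 2 ≤ i₀ ∧ i₀ ≤ c) (hj₀ : c < j₀ ∧ j₀ ≤ d)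
    (hnot : ∀ i : Fin r, (s i, t i) ≠ (i₀, j₀)) :
    CombFreeSet ({w : List ℕ | ∃ i : Fin r, w = [t i, s i]} ∪
      {w : List ℕ | ∃ n : ℕ, 0 < n ∧ w = j₀ :: (List.replicate n i₀ ++ [1])}) := by
  have key : ∀ w ∈ ({w : List ℕ | ∃ i : Fin r, w = [t i, s i]} ∪
      {w : List ℕ | ∃ n : ℕ, 0 < n ∧ w = j₀ :: (List.replicate n i₀ ++ [1])}),
      ∃ h tl, w = h :: tl ∧ c < h ∧ ∀ x ∈ tl, x ≤ c := by
    rintro w (⟨i, rfl⟩ | ⟨n, hn, rfl⟩)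
    · exact ⟨t i, [s i], rfl, (ht i).1, by simpa using (hs i).2⟩
    · refine ⟨j₀, _, rfl, hj₀.1, ?_⟩
      intro x hx
      simp [List.mem_replicate] at hx
      rcases hx with ⟨_, rfl⟩ | rfl
      · exact hi₀.2
      · omega
  constructor
  · rintro u hu w hw hne hinf
    rcases hu with ⟨i, rfl⟩ | ⟨n, hn, rfl⟩
    · rcases hw with ⟨j, rfl⟩ | ⟨m, hm, rfl⟩
      · exact hne (hinf.eq_of_length (by simp))
      · obtain ⟨a, b, hab⟩ := hinf
        match a with
        | [] =>
          simp at hab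
          obtain ⟨m', rfl⟩ := Nat.exists_eq_succ_of_ne_zero hm.ne'
          rw [List.replicate_succ] at hab
          simp at hab
          exact hnot i (by simp [hab.1, hab.2.1])
        | x :: a' =>
          have : t i ∈ List.replicate m i₀ ++ [1] := by
            rw [List.cons_append, List.cons_append, List.cons.injEq] at hab
            rw [← hab.2]; simp
          simp [List.mem_replicate] at this
          rcases this with ⟨_, h⟩ | h
          · have := (ht i).1; omega
          · have := (ht i).1; omega
    · rcases hw with ⟨j, rfl⟩ | ⟨m, hm, rfl⟩
      · have := hinf.length_le
        simp at this
        omega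
      · obtain ⟨a, b, hab⟩ := hinf
        match a with
        | [] =>
          simp at hab
          have hlen : n < m + 1 := by
            have := congrArg List.length hab
            simp at this
            omega
          have hnm : n ≠ m := by rintro rfl; exact hne (by simp [← hab])
          have hnlt : n < m := by omega
          clear hlen
          have hpre : List.replicate n i₀ ++ [1] <+: List.replicate m i₀ ++ [1] :=
            ⟨b, by simpa using hab⟩
          have htake := List.prefix_iff_eq_take.mp hpre
          rw [List.length_append, List.length_replicate] at htake
          rw [List.take_append_of_le_length (by simpa using hnlt),
            List.take_replicate, min_eq_left (by simp; omega)] at htake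
          simp only [List.length_singleton] at htake
          have : (1:ℕ) = i₀ := by
            have h2 : List.replicate n i₀ ++ [1] = List.replicate n i₀ ++ [i₀] := by
              rw [htake, ← List.replicate_succ']
            simpa using h2
          omega
        | x :: a' =>
          have : j₀ ∈ List.replicate m i₀ ++ [1] := by
            rw [List.cons_append, List.cons_append, List.cons.injEq] at hab
            rw [← hab.2]; simp
          simp [List.mem_replicate] at this
          rcases this with ⟨_, h⟩ | h <;> omega
  · rintro w hw w' hw' sf hne hsuf hnew hpre hnew'
    obtain ⟨h, tl, rfl, hh, htl⟩ := key w hw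
    obtain ⟨h', tl', rfl, hh', -⟩ := key w' hw'
    rcases List.suffix_cons_iff.mp hsuf with rfl | hsuf'
    · exact hnew rfl
    · obtain ⟨x, sf', rfl⟩ := List.exists_cons_of_ne_nil hne
      have hx : x ≤ c := htl x (hsuf'.subset List.mem_cons_self)
      have hx' : x = h' := (List.cons_prefix_cons.mp hpre).1
      omega
end

section
/- Let d and c be integers with 1 ≤ c < d, and let E = {X_{t(i)} X_{s(i)} : 1 ≤ i ≤ r} be a family of two-letter words given by pairwise distinct pairs with 1 ≤ s(i) ≤ c < t(i) ≤ d. Suppose i₀, j₀ are indices with 1 ≤ i₀ ≤ c < j₀ < d such that (i₀, j₀) is not among the pairs (s(i), t(i)). Then the family E ∪ { X_d X_{j₀}^n X_{i₀} : n ∈ ℤ_{>0} } (where X_d X_{j₀}^n X_{i₀} denotes the word consisting of the letter X_d, followed by n copies of the letter X_{j₀}, followed by the letter X_{i₀}) is combinatorially free. -/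
/-- Let `1 ≤ c < d`, let `E = {X_{t i} X_{s i}}` be given by pairwise distinct pairs
with `1 ≤ s i ≤ c < t i ≤ d`, and let `1 ≤ i₀ ≤ c < j₀ < d` with `(i₀, j₀)` not among
the pairs `(s i, t i)`.  Then `E ∪ { X_d X_{j₀}^n X_{i₀} : n ≥ 1 }` is combinatorially
free. -/
theorem stmt_3 (d c r : ℕ) (hc : 1 ≤ c) (hcd : c < d)
    (s t : Fin r → ℕ)
    (hs : ∀ i, 1 ≤ s i ∧ s i ≤ c)
    (ht : ∀ i, c < t i ∧ t i ≤ d)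
    (hdist : Function.Injective fun i => (s i, t i))
    (i₀ j₀ : ℕ) (hi₀ : 1 ≤ i₀ ∧ i₀ ≤ c) (hj₀ : c < j₀ ∧ j₀ < d)
    (hnot : ∀ i : Fin r, (s i, t i) ≠ (i₀, j₀)) :
    CombFreeSet ({w : List ℕ | ∃ i : Fin r, w = [t i, s i]} ∪
      {w : List ℕ | ∃ n : ℕ, 0 < n ∧ w = d :: (List.replicate n j₀ ++ [i₀])}) := by
  -- all letters of `d :: replicate n j₀` are `> c`
  have hmemW : ∀ (n : ℕ), ∀ x ∈ (d :: List.replicate n j₀), c < x := by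
    intro n x hx
    rcases List.mem_cons.1 hx with rfl | hx
    · exact hcd
    · rw [List.eq_of_mem_replicate hx]; exact hj₀.1
  have hWeq : ∀ n, d :: (List.replicate n j₀ ++ [i₀]) = (d :: List.replicate n j₀) ++ [i₀] := by
    intro n; simp
  have hdropW : ∀ n, (d :: (List.replicate n j₀ ++ [i₀])).dropLast = d :: List.replicate n j₀ := by
    intro n; rw [hWeq n, List.dropLast_concat]
  have hlastW : ∀ n, (d :: (List.replicate n j₀ ++ [i₀])).getLast? = some i₀ := by
    intro n; rw [hWeq n]; exact List.getLast?_concat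
  have hlastDW : ∀ n, 0 < n → (d :: List.replicate n j₀).getLast? = some j₀ := by
    intro n hn
    obtain ⟨m, rfl⟩ := Nat.exists_eq_add_of_lt hn
    rw [show d :: List.replicate (0 + m + 1) j₀
        = (d :: List.replicate (0 + m) j₀) ++ [j₀] by
      simp [List.replicate_succ']]
    exact List.getLast?_concat
  constructor
  · -- no word is a factor of another
    rintro u hu w hw hne hinf
    rcases hu with ⟨i, rfl⟩ | ⟨n, hn, rfl⟩
    · rcases hw with ⟨j, rfl⟩ | ⟨n, hn, rfl⟩
      · exact hne (hinf.sublist.eq_of_length (by simp))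
      · -- two-letter word inside a long word
        obtain ⟨p, q, hpq⟩ := hinf
        by_cases hq : q = []
        · subst hq
          simp only [List.append_nil] at hpq
          -- last letters
          have h1 : s i = i₀ := by
            have := hlastW n
            rw [← hpq, show p ++ [t i, s i] = (p ++ [t i]) ++ [s i] by simp,
              List.getLast?_concat] at this
            exact Option.some_injective _ this
          have h2 : t i = j₀ := by
            have hd : (p ++ [t i, s i]).dropLast = d :: List.replicate n j₀ := by
              rw [hpq]; exact hdropW n
            rw [show p ++ [t i, s i] = (p ++ [t i]) ++ [s i] by simp,
              List.dropLast_concat] at hd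
            have := hlastDW n hn
            rw [← hd, List.getLast?_concat] at this
            exact Option.some_injective _ this
          exact hnot i (by rw [h1, h2])
        · -- s i occurs strictly inside, but all inner letters are > c
          have hd : (p ++ [t i, s i] ++ q).dropLast = d :: List.replicate n j₀ := by
            rw [hpq]; exact hdropW n
          rw [List.dropLast_append_of_ne_nil hq] at hd
          have hmem : s i ∈ d :: List.replicate n j₀ := by
            rw [← hd]; simp
          have := hmemW n _ hmem
          have := (hs i).2
          omega
    · rcases hw with ⟨j, rfl⟩ | ⟨m, hm, rfl⟩
      · -- long word inside a two-letter word: impossible by length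
        have := hinf.length_le
        simp at this
        omega
      · -- long word inside a long word
        have hnm : n ≠ m := by
          intro h; exact hne (by rw [h])
        obtain ⟨p, q, hpq⟩ := hinf
        rcases p with _ | ⟨a, p⟩
        · -- prefix case
          simp only [List.nil_append, List.cons_append, List.cons.injEq] at hpq
          have hpq' := hpq.2
          have hnlt : n < m := by
            have hl := congrArg List.length hpq'
            simp at hl
            omega
          have hL : ((List.replicate n j₀ ++ [i₀]) ++ q)[n]? = some i₀ := by
            rw [List.append_assoc, List.getElem?_append_right (by simp)]
            simp
          rw [hpq'] at hL
          rw [List.getElem?_append_left (by simp [hnlt]),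
            List.getElem?_replicate_of_lt hnlt] at hL
          have : i₀ = j₀ := (Option.some_injective _ hL).symm
          omega
        · -- the letter `d` would occur strictly inside the long word
          simp only [List.cons_append, List.cons.injEq] at hpq
          have hmem : d ∈ List.replicate m j₀ ++ [i₀] := by
            rw [← hpq.2]; simp
          rcases List.mem_append.1 hmem with h | h
          · have := List.eq_of_mem_replicate h; omega
          · simp at h; omega
  · -- suffix/prefix condition
    intro w hw w' hw' σ hσne hσsuf hσw hσpre hσw'
    -- the last letter of σ is ≤ c
    obtain ⟨x, hx⟩ : ∃ x, σ.getLast? = some x := by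
      cases h : σ.getLast? with
      | none => exact absurd (List.getLast?_eq_none_iff.1 h) hσne
      | some x => exact ⟨x, rfl⟩
    have hxw : w.getLast? = some x := by
      obtain ⟨a, rfl⟩ := hσsuf
      rw [List.getLast?_append_of_ne_nil a hσne, hx]
    have hxc : x ≤ c := by
      rcases hw with ⟨i, rfl⟩ | ⟨n, hn, rfl⟩
      · have : s i = x := by
          have : ([t i, s i] : List ℕ).getLast? = some (s i) := by
            rw [show ([t i, s i] : List ℕ) = [t i] ++ [s i] by simp,
              List.getLast?_concat]
          rw [this] at hxw; exact Option.some_injective _ hxw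
        rw [← this]; exact (hs i).2
      · have : i₀ = x := by
          have := hlastW n
          rw [this] at hxw; exact Option.some_injective _ hxw
        rw [← this]; exact hi₀.2
    -- but σ is a prefix of the dropLast of w', all of whose letters are > c
    obtain ⟨u, hu⟩ := hσpre
    have hune : u ≠ [] := by
      intro h; rw [h, List.append_nil] at hu; exact hσw' hu
    have hσd : σ <+: w'.dropLast := by
      rw [← hu, List.dropLast_append_of_ne_nil hune]
      exact List.prefix_append _ _
    have hxmem : x ∈ w'.dropLast := hσd.mem (List.mem_of_getLast? hx)
    rcases hw' with ⟨j, rfl⟩ | ⟨n, hn, rfl⟩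
    · have : x ∈ [t j] := by
        simpa [show ([t j, s j] : List ℕ).dropLast = [t j] from rfl] using hxmem
      simp at this
      have := (ht j).1
      omega
    · rw [hdropW n] at hxmem
      have := hmemW n _ hxmem
      omega
end

section
/- Let p be a prime, let A = 𝔽_p⟨X_1,…,X_5⟩ be the free noncommutative polynomial algebra on 5 generators, let (a_n)_{n≥1} be a strictly increasing sequence of positive integers, and let C be the two-sided ideal of A generated by the monomials X_5X_3, X_4X_2, X_4X_3, X_5X_2, X_5X_1 and X_5 X_4^{a_n} X_1 for all n ≥ 1. Setting b_n = dim_{𝔽_p}(A^{(n)}/(C ∩ A^{(n)})), the identity (∑_{n≥0} b_n t^n) · (1 − 5t + 5t² + ∑_{n≥1} t^{a_n + 2}) = 1 holds in the ring of formal power series ℤ⟦t⟧ (the coefficient of t^k in ∑_{n≥1} t^{a_n+2} being the number of n with a_n + 2 = k, which is 0 or 1). -/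
noncomputable section

/-- Words in the letters `X_1, …, X_5`: elements of the free monoid on `5` letters,
the letter `X_i` being encoded by `(i - 1 : Fin 5)`. -/
abbrev Word5 := FreeMonoid (Fin 5)

/-- The free noncommutative polynomial algebra `A = 𝔽_p⟨X_1, …, X_5⟩`, modelled as
the monoid algebra over `ZMod p` of the free monoid on `5` letters. -/
abbrev FA (p : ℕ) := MonoidAlgebra (ZMod p) Word5

/-- The monomial of `A` corresponding to a word, e.g. `mono p [4, 2] = X_5 * X_3`. -/
def mono (p : ℕ) (l : List (Fin 5)) : FA p :=
  MonoidAlgebra.single (FreeMonoid.ofList l) 1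

/-- The homogeneous component `A^{(n)}`: the `𝔽_p`-span of the monomials (words) of
degree `n`. -/
def homComponent (p n : ℕ) : Submodule (ZMod p) (FA p) :=
  Submodule.span (ZMod p)
    {x | ∃ w : Word5, (FreeMonoid.toList w).length = n ∧ x = MonoidAlgebra.single w 1}

/-- The two-sided ideal of `A` generated by a set `G`: the `𝔽_p`-span of all products
`a * g * b` with `g ∈ G`. -/
def twoSidedSpan (p : ℕ) (G : Set (FA p)) : Submodule (ZMod p) (FA p) :=
  Submodule.span (ZMod p) {x | ∃ a g b : FA p, g ∈ G ∧ x = a * g * b}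

/-- `dim_{𝔽_p} (A^{(n)} / (C ∩ A^{(n)}))`. -/
def bcoef (p : ℕ) (C : Submodule (ZMod p) (FA p)) (n : ℕ) : ℕ :=
  Module.finrank (ZMod p)
    (↥(homComponent p n) ⧸ (C.comap (homComponent p n).subtype))

namespace Ex16

lemma concat_eq_concat {α : Type*} {u v : List α} {x y : α}
    (h : u ++ [x] = v ++ [y]) : u = v ∧ x = y := by
  have h2 := List.append_inj h (by have := congrArg List.length h; simp at this; omega)
  refine ⟨h2.1, by simpa using h2.2⟩

/-- the long forbidden word `X5 X4^{a k} X1` -/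
def longw (a : ℕ → ℕ) (k : ℕ) : List (Fin 5) := 4 :: (List.replicate (a k) 3 ++ [0])

def quads : List (List (Fin 5)) := [[4,2],[3,1],[3,2],[4,1],[4,0]]

def F (a : ℕ → ℕ) : Set (List (Fin 5)) := {l | l ∈ quads ∨ ∃ k, l = longw a k}

def Good (a : ℕ → ℕ) (l : List (Fin 5)) : Prop := ∀ f ∈ F a, ¬ f <:+: l

variable {a : ℕ → ℕ}

lemma longw_eq_concat (k : ℕ) : longw a k = (4 :: List.replicate (a k) 3) ++ [0] := by
  simp [longw]

lemma length_longw (k : ℕ) : (longw a k).length = a k + 2 := by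
  simp [longw]

lemma good_of_infix {l m : List (Fin 5)} (h : Good a m) (hlm : l <:+: m) : Good a l :=
  fun f hf hfl => h f hf (hfl.trans hlm)

lemma length_F {f : List (Fin 5)} (hf : f ∈ F a) (hpos : ∀ n, 0 < a n) : 2 ≤ f.length := by
  rcases hf with hf | ⟨k, rfl⟩
  · fin_cases hf <;> simp
  · rw [length_longw]; have := hpos k; omega

/-- every forbidden word ends with a letter in {0,1,2} -/
lemma last_F {f : List (Fin 5)} (hf : f ∈ F a) :
    ∃ f' x, f = f' ++ [x] ∧ (x = 0 ∨ x = 1 ∨ x = 2) := by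
  rcases hf with hf | ⟨k, rfl⟩
  · fin_cases hf
    · exact ⟨[4], 2, rfl, by tauto⟩
    · exact ⟨[3], 1, rfl, by tauto⟩
    · exact ⟨[3], 2, rfl, by tauto⟩
    · exact ⟨[4], 1, rfl, by tauto⟩
    · exact ⟨[4], 0, rfl, by tauto⟩
  · exact ⟨4 :: List.replicate (a k) 3, 0, longw_eq_concat k, by tauto⟩

lemma suffix_concat_iff {f l : List (Fin 5)} {x : Fin 5} :
    f <:+ l ++ [x] ↔ f = [] ∨ ∃ f', f = f' ++ [x] ∧ f' <:+ l := by
  constructor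
  · rintro ⟨s, hs⟩
    rcases List.eq_nil_or_concat f with rfl | ⟨f', y, rfl⟩
    · exact Or.inl rfl
    · simp only [List.concat_eq_append] at hs ⊢
      have hs' : (s ++ f') ++ [y] = l ++ [x] := by
        rw [← hs]; simp [List.append_assoc]
      obtain ⟨h3, h4⟩ := concat_eq_concat hs'
      subst h4
      exact Or.inr ⟨f', rfl, ⟨s, h3⟩⟩
  · rintro (rfl | ⟨f', rfl, ⟨s, rfl⟩⟩)
    · exact List.nil_suffix
    · exact ⟨s, by simp⟩

lemma infix_concat_iff {f l : List (Fin 5)} {x : Fin 5} :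
    f <:+: l ++ [x] ↔ f <:+: l ∨ f <:+ l ++ [x] := by
  constructor
  · rintro ⟨s, t, hst⟩
    rcases List.eq_nil_or_concat t with rfl | ⟨t', y, rfl⟩
    · exact Or.inr ⟨s, by simpa using hst⟩
    · left
      simp only [List.concat_eq_append] at hst
      have hst' : (s ++ f ++ t') ++ [y] = l ++ [x] := by
        rw [← hst]; simp [List.append_assoc]
      obtain ⟨h3, _⟩ := concat_eq_concat hst'
      exact ⟨s, t', h3⟩
  · rintro (h | h)
    · exact h.trans ⟨[], [x], by simp⟩
    · exact h.isInfix

lemma good_concat_iff {l : List (Fin 5)} {x : Fin 5} :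
    Good a (l ++ [x]) ↔ Good a l ∧ ∀ f ∈ F a, ¬ f <:+ l ++ [x] := by
  constructor
  · intro h
    exact ⟨good_of_infix h ⟨[], [x], by simp⟩, fun f hf hs => h f hf hs.isInfix⟩
  · rintro ⟨h1, h2⟩ f hf hfi
    rcases infix_concat_iff.1 hfi with h | h
    · exact h1 f hf h
    · exact h2 f hf h

/-- appending a letter 3 or 4 preserves goodness -/
lemma good_concat34 {l : List (Fin 5)} {x : Fin 5} (hx : x = 3 ∨ x = 4) (h : Good a l) :
    Good a (l ++ [x]) := by
  rw [good_concat_iff]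
  refine ⟨h, fun f hf hs => ?_⟩
  obtain ⟨f', y, rfl, hy⟩ := last_F hf
  rcases suffix_concat_iff.1 hs with h0 | ⟨f'', hf'', _⟩
  · simp at h0
  · have hyx : y = x := (concat_eq_concat hf'').2.symm ▸ rfl
    rw [hyx] at hy
    rcases hx with rfl | rfl <;> revert hy <;> decide
  
/-- we may remove a trailing `4 3^c` block -/
lemma good_append_rep {l : List (Fin 5)} (c : ℕ) (h : Good a l) :
    Good a (l ++ 4 :: List.replicate c 3) := by
  induction c with
  | zero => simpa using good_concat34 (Or.inr rfl) h
  | succ c ih =>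
      have he : l ++ 4 :: List.replicate (c+1) 3 = (l ++ 4 :: List.replicate c 3) ++ [(3 : Fin 5)] := by
        rw [List.replicate_succ']; simp
      rw [he]
      exact good_concat34 (Or.inl rfl) ih

/-- F is suffix-free -/
lemma F_suffix_free (hpos : ∀ n, 0 < a n)
    {f₁ f₂ : List (Fin 5)} (h₁ : f₁ ∈ F a) (h₂ : f₂ ∈ F a) (hs : f₁ <:+ f₂) : f₁ = f₂ := by
  rcases h₂ with h₂ | ⟨k, rfl⟩
  · have hl1 := length_F h₁ hpos
    have hl2 : f₂.length = 2 := by fin_cases h₂ <;> rfl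
    exact hs.eq_of_length (by have := hs.length_le; omega)
  · obtain ⟨s, hsf⟩ := hs
    rcases s with _ | ⟨z, s'⟩
    · simpa using hsf
    · have htail : s' ++ f₁ = List.replicate (a k) 3 ++ [0] := by
        have := congrArg List.tail hsf
        simpa [longw] using this
      exfalso
      have hmem : ∀ y ∈ f₁, y = 3 ∨ y = 0 := by
        intro y hy
        have hy2 : y ∈ List.replicate (a k) 3 ++ [0] := htail ▸ (List.mem_append_right s' hy)
        rcases List.mem_append.1 hy2 with h | h
        · exact Or.inl (List.mem_replicate.1 h).2
        · simp at h; exact Or.inr h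
      rcases h₁ with h₁ | ⟨j, rfl⟩
      · have : ∃ y ∈ f₁, ¬(y = 3 ∨ y = 0) := by fin_cases h₁ <;> decide
        obtain ⟨y, hy, hny⟩ := this
        exact hny (hmem y hy)
      · have := hmem 4 (by simp [longw])
        exact absurd this (by decide)

/-- unique forbidden suffix -/
lemma unique_suffix (hpos : ∀ n, 0 < a n)
    {f₁ f₂ w : List (Fin 5)} (h₁ : f₁ ∈ F a) (h₂ : f₂ ∈ F a)
    (hs₁ : f₁ <:+ w) (hs₂ : f₂ <:+ w) : f₁ = f₂ := by
  rcases List.suffix_or_suffix_of_suffix hs₁ hs₂ with h | h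
  · exact F_suffix_free hpos h₁ h₂ h
  · exact (F_suffix_free hpos h₂ h₁ h).symm

end Ex16

namespace Ex16
open Finset
open scoped Classical
variable {a : ℕ → ℕ}

/-- all words of length n -/
def allW (n : ℕ) : Finset (List (Fin 5)) := (List.finite_length_eq (Fin 5) n).toFinset

lemma mem_allW {n : ℕ} {l : List (Fin 5)} : l ∈ allW n ↔ l.length = n :=
  Set.Finite.mem_toFinset _

/-- the good words of length n -/
def Gfin (a : ℕ → ℕ) (n : ℕ) : Finset (List (Fin 5)) := (allW n).filter (Good a)

/-- the number of good words of length n -/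
def bG (a : ℕ → ℕ) (n : ℕ) : ℕ := (Gfin a n).card

lemma mem_Gfin {n : ℕ} {l : List (Fin 5)} : l ∈ Gfin a n ↔ l.length = n ∧ Good a l := by
  classical
  simp [Gfin, mem_allW]

lemma good_of_short (hpos : ∀ n, 0 < a n) {l : List (Fin 5)} (h : l.length ≤ 1) : Good a l := by
  intro f hf hfl
  have := hfl.length_le
  have := length_F hf hpos
  omega

lemma bG_zero (hpos : ∀ n, 0 < a n) : bG a 0 = 1 := by
  have : Gfin a 0 = {[]} := by
    ext l
    simp only [mem_Gfin, Finset.mem_singleton, List.length_eq_zero_iff]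
    constructor
    · rintro ⟨rfl, -⟩; rfl
    · rintro rfl; exact ⟨rfl, good_of_short hpos (by simp)⟩
  simp [bG, this]

/-- words of length m+1 whose dropLast is good -/
def NB (a : ℕ → ℕ) (m : ℕ) : Finset (List (Fin 5)) :=
  Finset.image (fun ux : List (Fin 5) × Fin 5 => ux.1 ++ [ux.2]) (Gfin a m ×ˢ Finset.univ)

lemma mem_NB {m : ℕ} {w : List (Fin 5)} :
    w ∈ NB a m ↔ w.length = m + 1 ∧ Good a w.dropLast := by
  classical
  simp only [NB, Finset.mem_image, Finset.mem_product, Finset.mem_univ, and_true, Prod.exists]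
  constructor
  · rintro ⟨u, x, hu, rfl⟩
    rw [mem_Gfin] at hu
    simp [List.dropLast_concat, hu.1, hu.2]
  · rintro ⟨hlen, hgood⟩
    have hne : w ≠ [] := by intro h; rw [h] at hlen; simp at hlen
    refine ⟨w.dropLast, w.getLast hne, ?_, List.dropLast_append_getLast hne⟩
    rw [mem_Gfin]
    constructor
    · simp [List.length_dropLast, hlen]
    · exact hgood

lemma card_NB (m : ℕ) : (NB a m).card = 5 * bG a m := by
  classical
  rw [NB, Finset.card_image_of_injective _ (fun u v huv => by
    obtain ⟨h1, h2⟩ := concat_eq_concat huv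
    exact Prod.ext h1 h2)]
  rw [Finset.card_product]
  simp [bG, Fintype.card_fin, Nat.mul_comm]

def NBbad (a : ℕ → ℕ) (m : ℕ) : Finset (List (Fin 5)) :=
  (NB a m).filter (fun w => ¬ Good a w)

lemma Gfin_succ_eq (m : ℕ) : Gfin a (m+1) = (NB a m).filter (Good a) := by
  classical
  ext w
  simp only [mem_Gfin, Finset.mem_filter, mem_NB]
  constructor
  · rintro ⟨hlen, hgood⟩
    exact ⟨⟨hlen, good_of_infix hgood (List.dropLast_prefix w).isInfix⟩, hgood⟩
  · rintro ⟨⟨hlen, -⟩, hgood⟩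
    exact ⟨hlen, hgood⟩

lemma card_split (m : ℕ) : bG a (m+1) + (NBbad a m).card = 5 * bG a m := by
  classical
  rw [← card_NB (a := a) m, bG, Gfin_succ_eq, NBbad]
  exact Finset.card_filter_add_card_filter_not _

lemma bG_one (hpos : ∀ n, 0 < a n) : bG a 1 = 5 * bG a 0 := by
  have h0 : NBbad a 0 = ∅ := by
    classical
    ext w
    simp only [NBbad, Finset.mem_filter, mem_NB, Finset.notMem_empty, iff_false, not_and]
    rintro ⟨hlen, -⟩ hbad
    exact hbad (good_of_short hpos (by omega))
  have := card_split (a := a) 0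
  rw [h0] at this
  simpa using this

end Ex16

namespace Ex16
open Finset
open scoped Classical
variable {a : ℕ → ℕ}

def quadsF : Finset (List (Fin 5)) := quads.toFinset

def Kfin (a : ℕ → ℕ) (N : ℕ) : Finset ℕ := (Finset.range N).filter (fun k => a k + 2 ≤ N)

def Fm (a : ℕ → ℕ) (N : ℕ) : Finset (List (Fin 5)) := quadsF ∪ (Kfin a N).image (longw a)

def piece (a : ℕ → ℕ) (N : ℕ) (f : List (Fin 5)) : Finset (List (Fin 5)) :=
  (Gfin a (N - f.length)).image (· ++ f)

lemma Fm_sub_F {N : ℕ} {f : List (Fin 5)} (hf : f ∈ Fm a N) : f ∈ F a := by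
  rcases Finset.mem_union.1 hf with h | h
  · exact Or.inl (by simpa [quadsF] using h)
  · obtain ⟨k, -, rfl⟩ := Finset.mem_image.1 h
    exact Or.inr ⟨k, rfl⟩

lemma length_le_of_mem_Fm {m : ℕ} {f : List (Fin 5)} (hf : f ∈ Fm a (m+2)) :
    f.length ≤ m + 2 := by
  rcases Finset.mem_union.1 hf with h | h
  · have : f ∈ quads := by simpa [quadsF] using h
    fin_cases this <;> simp
  · obtain ⟨k, hk, rfl⟩ := Finset.mem_image.1 h
    rw [length_longw]
    exact (Finset.mem_filter.1 hk).2

lemma good_append_dropLast {f v : List (Fin 5)} (hf : f ∈ F a) (hv : Good a v) :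
    Good a (v ++ f.dropLast) := by
  rcases hf with hf | ⟨k, rfl⟩
  · fin_cases hf
    · exact good_concat34 (Or.inr rfl) hv
    · exact good_concat34 (Or.inl rfl) hv
    · exact good_concat34 (Or.inl rfl) hv
    · exact good_concat34 (Or.inr rfl) hv
    · exact good_concat34 (Or.inr rfl) hv
  · have : (longw a k).dropLast = 4 :: List.replicate (a k) 3 := by
      rw [longw_eq_concat, List.dropLast_concat]
    rw [this]
    exact good_append_rep _ hv

lemma mem_piece {N : ℕ} {f w : List (Fin 5)} :
    w ∈ piece a N f ↔ ∃ v, v.length = N - f.length ∧ Good a v ∧ v ++ f = w := by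
  simp only [piece, Finset.mem_image, mem_Gfin]
  constructor
  · rintro ⟨v, ⟨h1, h2⟩, h3⟩; exact ⟨v, h1, h2, h3⟩
  · rintro ⟨v, h1, h2, h3⟩; exact ⟨v, ⟨h1, h2⟩, h3⟩

lemma NBbad_eq (hpos : ∀ n, 0 < a n) (hmono : StrictMono a) (m : ℕ) :
    NBbad a (m+1) = (Fm a (m+2)).biUnion (fun f => piece a (m+2) f) := by
  ext w
  simp only [NBbad, Finset.mem_filter, mem_NB, Finset.mem_biUnion]
  constructor
  · rintro ⟨⟨hlen, hgdrop⟩, hbad⟩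
    have hex : ∃ f ∈ F a, f <:+: w := by
      by_contra hcon
      push_neg at hcon
      exact hbad (fun f hf => hcon f hf)
    obtain ⟨f, hf, hinf⟩ := hex
    have hne : w ≠ [] := by intro h; rw [h] at hlen; simp at hlen
    have hw : w.dropLast ++ [w.getLast hne] = w := List.dropLast_append_getLast hne
    have hsuf : f <:+ w := by
      rw [← hw] at hinf
      rcases infix_concat_iff.1 hinf with h | h
      · exact (hgdrop f hf h).elim
      · rwa [hw] at h
    obtain ⟨v, rfl⟩ := hsuf
    have hflen := length_F hf hpos
    have hl2 : v.length + f.length = m + 2 := by simpa using hlen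
    have hvlen : v.length = m + 2 - f.length := by omega
    -- Good v
    obtain ⟨f', y, rfl, -⟩ := last_F hf
    have hdrop : (v ++ (f' ++ [y])).dropLast = v ++ f' := by
      rw [← List.append_assoc, List.dropLast_concat]
    rw [hdrop] at hgdrop
    have hgv : Good a v := good_of_infix hgdrop ⟨[], f', by simp⟩
    refine ⟨f' ++ [y], ?_, mem_piece.2 ⟨v, hvlen, hgv, rfl⟩⟩
    -- f ∈ Fm
    rcases hf with hq | ⟨k, hk⟩
    · exact Finset.mem_union_left _ (by simpa [quadsF] using hq)
    · refine Finset.mem_union_right _ (Finset.mem_image.2 ⟨k, ?_, hk.symm⟩)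
      have h1 : a k + 2 ≤ m + 2 := by
        rw [hk] at hl2
        rw [length_longw] at hl2
        omega
      have h2 : k < m + 2 := lt_of_le_of_lt hmono.le_apply (by omega)
      exact Finset.mem_filter.2 ⟨Finset.mem_range.2 h2, h1⟩
  · rintro ⟨f, hf, hw⟩
    obtain ⟨v, hvlen, hgv, rfl⟩ := mem_piece.1 hw
    have hfF := Fm_sub_F hf
    have hflen2 := length_F hfF hpos
    have hflen := length_le_of_mem_Fm hf
    have hne : f ≠ [] := by intro h; rw [h] at hflen2; simp at hflen2
    refine ⟨⟨?_, ?_⟩, ?_⟩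
    · simp [hvlen]; omega
    · rw [List.dropLast_append_of_ne_nil hne]
      exact good_append_dropLast hfF hgv
    · intro hgw
      have hsuf : f <:+ v ++ f := ⟨v, rfl⟩
      exact hgw f hfF hsuf.isInfix

lemma card_NBbad (hpos : ∀ n, 0 < a n) (hmono : StrictMono a) (m : ℕ) :
    (NBbad a (m+1)).card = ∑ f ∈ Fm a (m+2), bG a (m + 2 - f.length) := by
  rw [NBbad_eq hpos hmono m]
  rw [Finset.card_biUnion]
  · refine Finset.sum_congr rfl (fun f hf => ?_)
    rw [piece, Finset.card_image_of_injective _ (List.append_left_injective f)]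
    rfl
  · intro f hf g hg hfg
    rw [Function.onFun, Finset.disjoint_left]
    intro w hwf hwg
    obtain ⟨v, -, -, rfl⟩ := mem_piece.1 hwf
    obtain ⟨v', -, -, hv'⟩ := mem_piece.1 hwg
    exact hfg (unique_suffix hpos (Fm_sub_F hf) (Fm_sub_F hg) ⟨v, rfl⟩ ⟨v', hv'⟩)

lemma sum_Fm (hpos : ∀ n, 0 < a n) (hmono : StrictMono a) (m : ℕ) :
    ∑ f ∈ Fm a (m+2), bG a (m + 2 - f.length)
      = 5 * bG a m + ∑ k ∈ Kfin a (m+2), bG a (m - a k) := by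
  rw [Fm, Finset.sum_union]
  · congr 1
    · have h1 : ∀ f ∈ quadsF, bG a (m + 2 - f.length) = bG a m := by
        intro f hf
        have : f ∈ quads := by simpa [quadsF] using hf
        fin_cases this <;> rfl
      rw [Finset.sum_congr rfl h1, Finset.sum_const]
      have : quadsF.card = 5 := by decide
      rw [this]; ring
    · rw [Finset.sum_image]
      · refine Finset.sum_congr rfl (fun k hk => ?_)
        rw [length_longw]
        congr 1
        omega
      · intro i hi j hj hij
        have := congrArg List.length hij
        rw [length_longw, length_longw] at this
        exact hmono.injective (by omega)
  · rw [Finset.disjoint_left]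
    intro f hf hg
    obtain ⟨k, -, hlk⟩ := Finset.mem_image.1 hg
    have hq : f ∈ quads := by simpa [quadsF] using hf
    have hp := hpos k
    have hl := congrArg List.length hlk
    rw [length_longw] at hl
    simp only [quads, List.mem_cons, List.not_mem_nil, or_false] at hq
    rcases hq with h|h|h|h|h <;> rw [h] at hl <;> simp at hl <;> omega

theorem bG_rec (hpos : ∀ n, 0 < a n) (hmono : StrictMono a) (m : ℕ) :
    bG a (m+2) + (5 * bG a m + ∑ k ∈ Kfin a (m+2), bG a (m - a k)) = 5 * bG a (m+1) := by
  have h := card_split (a := a) (m+1)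
  rw [card_NBbad hpos hmono m, sum_Fm hpos hmono m] at h
  exact h

end Ex16

namespace Ex16
open scoped Classical
variable {a : ℕ → ℕ}

def BadW (a : ℕ → ℕ) : Set Word5 := {w | ∃ f ∈ F a, f <:+: FreeMonoid.toList w}
def LenW (n : ℕ) : Set Word5 := {w | (FreeMonoid.toList w).length = n}

def Gens (p : ℕ) (a : ℕ → ℕ) : Set (FA p) :=
  ({mono p [4, 2], mono p [3, 1], mono p [3, 2], mono p [4, 1], mono p [4, 0]} : Set (FA p)) ∪
    {x | ∃ n : ℕ, x = mono p (4 :: (List.replicate (a n) 3 ++ [0]))}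

lemma mem_Gens_iff {p : ℕ} {x : FA p} : x ∈ Gens p a ↔ ∃ f ∈ F a, x = mono p f := by
  simp only [Gens, Set.mem_union, Set.mem_insert_iff, Set.mem_singleton_iff, Set.mem_setOf_eq,
    F, quads, List.mem_cons, List.not_mem_nil, or_false, longw]
  constructor
  · rintro ((rfl|rfl|rfl|rfl|rfl) | ⟨k, rfl⟩)
    · exact ⟨[4,2], by tauto, rfl⟩
    · exact ⟨[3,1], by tauto, rfl⟩
    · exact ⟨[3,2], by tauto, rfl⟩
    · exact ⟨[4,1], by tauto, rfl⟩
    · exact ⟨[4,0], by tauto, rfl⟩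
    · exact ⟨4 :: (List.replicate (a k) 3 ++ [0]), Or.inr ⟨k, rfl⟩, rfl⟩
  · rintro ⟨f, (rfl|rfl|rfl|rfl|rfl) | ⟨k, rfl⟩, rfl⟩
    · tauto
    · tauto
    · tauto
    · tauto
    · tauto
    · exact Or.inr ⟨k, rfl⟩

lemma twoSidedSpan_eq (p : ℕ) :
    twoSidedSpan p (Gens p a) = MonoidAlgebra.supported (ZMod p) (ZMod p) (BadW a) := by
  apply le_antisymm
  · rw [twoSidedSpan]
    apply Submodule.span_le.2
    rintro x ⟨A, g, B, hg, rfl⟩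
    obtain ⟨f, hf, rfl⟩ := mem_Gens_iff.1 hg
    rw [SetLike.mem_coe, MonoidAlgebra.mem_supported]
    intro w hw
    have h1 := MonoidAlgebra.support_coeff_mul_subset (A * mono p f) B hw
    obtain ⟨u, hu, v, hv, rfl⟩ := Finset.mem_mul.1 h1
    have h2 := MonoidAlgebra.support_coeff_mul_subset A (mono p f) hu
    obtain ⟨s, hs, t, ht, rfl⟩ := Finset.mem_mul.1 h2
    have htf : t = FreeMonoid.ofList f := Finset.mem_singleton.1 (Finsupp.support_single_subset ht)
    exact ⟨f, hf, FreeMonoid.toList s, FreeMonoid.toList v, by simp [htf]⟩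
  · rw [MonoidAlgebra.supported_eq_span_single]
    apply Submodule.span_le.2
    rintro x ⟨w, hw, rfl⟩
    obtain ⟨f, hf, s, t, hst⟩ := hw
    have hw' : w = FreeMonoid.ofList s * FreeMonoid.ofList f * FreeMonoid.ofList t := by
      apply FreeMonoid.toList.injective
      simp [← hst]
    apply Submodule.subset_span
    refine ⟨MonoidAlgebra.single (FreeMonoid.ofList s) 1, mono p f,
      MonoidAlgebra.single (FreeMonoid.ofList t) 1, mem_Gens_iff.2 ⟨f, hf, rfl⟩, ?_⟩
    rw [mono, MonoidAlgebra.single_mul_single, MonoidAlgebra.single_mul_single, hw']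
    simp

lemma homComponent_eq (p n : ℕ) :
    homComponent p n = MonoidAlgebra.supported (ZMod p) (ZMod p) (LenW n) := by
  rw [homComponent, MonoidAlgebra.supported_eq_span_single]
  congr 1
  ext x
  constructor
  · rintro ⟨w, hw, rfl⟩; exact ⟨w, hw, rfl⟩
  · rintro ⟨w, hw, rfl⟩; exact ⟨w, hw, rfl⟩

lemma finrank_supported (K : Type*) [Field K] {ι : Type*} (s : Set ι) (hs : s.Finite) :
    Module.finrank K (MonoidAlgebra.supported K K s) = s.ncard := by
  haveI := hs.fintype
  have e : (MonoidAlgebra.supported K K s) ≃ₗ[K] (↥s → K) :=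
    (MonoidAlgebra.supportedEquivFinsupp s).trans (Finsupp.linearEquivFunOnFinite K K s)
  rw [e.finrank_eq, Module.finrank_fintype_fun_eq_card, ← Nat.card_eq_fintype_card,
    Nat.card_coe_set_eq]

lemma finrank_quot (p : ℕ) [Fact p.Prime] (s t : Set Word5) (ht : t.Finite)
    (S T : Submodule (ZMod p) (FA p)) (hS : S = MonoidAlgebra.supported (ZMod p) (ZMod p) s)
    (hT : T = MonoidAlgebra.supported (ZMod p) (ZMod p) t) :
    Module.finrank (ZMod p) (T ⧸ (S.comap T.subtype)) = (t \ s).ncard := by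
  subst hS hT
  set S := (MonoidAlgebra.supported (ZMod p) (ZMod p) s : Submodule (ZMod p) (FA p))
  set T := (MonoidAlgebra.supported (ZMod p) (ZMod p) t : Submodule (ZMod p) (FA p))
  haveI : Module.Finite (ZMod p) T := by
    haveI := ht.fintype
    have e : T ≃ₗ[ZMod p] (↥t → ZMod p) :=
      (MonoidAlgebra.supportedEquivFinsupp t).trans (Finsupp.linearEquivFunOnFinite (ZMod p) (ZMod p) t)
    exact Module.Finite.equiv e.symm
  have h1 : S.comap T.subtype = (S ⊓ T).comap T.subtype := by
    ext x
    simp only [Submodule.mem_comap, Submodule.mem_inf]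
    exact ⟨fun h => ⟨h, x.2⟩, fun h => h.1⟩
  have h2 : S ⊓ T = MonoidAlgebra.supported (ZMod p) (ZMod p) (s ∩ t) := by
    ext x
    simp only [Submodule.mem_inf, MonoidAlgebra.mem_supported, Set.subset_inter_iff, S, T]
  have e2 := Submodule.comapSubtypeEquivOfLe (inf_le_right : S ⊓ T ≤ T)
  have h3 : Module.finrank (ZMod p) (T ⧸ S.comap T.subtype) +
      Module.finrank (ZMod p) (S.comap T.subtype) =
      Module.finrank (ZMod p) T := Submodule.finrank_quotient_add_finrank _
  have h4 : Module.finrank (ZMod p) (S.comap T.subtype) = (s ∩ t).ncard := by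
    rw [h1, e2.finrank_eq, h2, finrank_supported (ZMod p) _ (ht.inter_of_right s)]
  rw [h4] at h3
  have h5 : Module.finrank (ZMod p) T = t.ncard := finrank_supported (ZMod p) t ht
  rw [h5] at h3
  have h6 : (t \ s).ncard = t.ncard - (s ∩ t).ncard := by
    have : t \ (s ∩ t) = t \ s := by
      ext y; simp only [Set.mem_diff, Set.mem_inter_iff]; tauto
    rw [← this, Set.ncard_diff Set.inter_subset_right (ht.inter_of_right s)]
  have h7 : (s ∩ t).ncard ≤ t.ncard := Set.ncard_le_ncard Set.inter_subset_right ht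
  have h8 : Module.finrank (ZMod p) (T ⧸ S.comap T.subtype) = t.ncard - (s ∩ t).ncard := by
    omega
  rw [h6]; exact h8

lemma LenW_finite (n : ℕ) : (LenW n).Finite := by
  have : LenW n = FreeMonoid.toList ⁻¹' {l : List (Fin 5) | l.length = n} := rfl
  rw [this]
  exact Set.Finite.preimage (Set.injOn_of_injective FreeMonoid.toList.injective)
    (List.finite_length_eq (Fin 5) n)

lemma bcoef_eq_bG (p : ℕ) (n : ℕ) (hp : p.Prime) :
    bcoef p (twoSidedSpan p (Gens p a)) n = bG a n := by
  haveI : Fact p.Prime := ⟨hp⟩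
  rw [bcoef, finrank_quot p (BadW a) (LenW n) (LenW_finite n) _ _
    (twoSidedSpan_eq p) (homComponent_eq p n)]
  have h1 : LenW n \ BadW a = FreeMonoid.ofList '' ↑(Gfin a n) := by
    ext w
    simp only [Set.mem_diff, LenW, BadW, Set.mem_setOf_eq, Set.mem_image, Finset.mem_coe,
      mem_Gfin]
    constructor
    · rintro ⟨hlen, hbad⟩
      push_neg at hbad
      exact ⟨FreeMonoid.toList w, ⟨hlen, fun f hf => hbad f hf⟩, by simp⟩
    · rintro ⟨l, ⟨hlen, hgood⟩, rfl⟩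
      refine ⟨by simpa using hlen, ?_⟩
      push_neg
      intro f hf
      simpa using hgood f hf
  rw [h1, Set.ncard_image_of_injective _ FreeMonoid.ofList.injective, Set.ncard_coe_finset]
  rfl

end Ex16

namespace Ex16
open Finset
open scoped Classical
variable {a : ℕ → ℕ}

lemma sum_conv (hmono : StrictMono a) (k : ℕ) :
    ∑ m ∈ Finset.range (k+1), bG a m * ({n | a n + 2 = k - m}.ncard) =
      ∑ n ∈ Kfin a k, bG a (k - (a n + 2)) := by
  have hset : ∀ m ∈ Finset.range (k+1),
      {n | a n + 2 = k - m}.ncard = ((Kfin a k).filter (fun n => k - (a n + 2) = m)).card := by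
    intro m hm
    rw [Finset.mem_range] at hm
    rw [← Set.ncard_coe_finset]
    congr 1
    ext n
    simp only [Set.mem_setOf_eq, Finset.coe_filter, Kfin, Finset.mem_filter, Finset.mem_range]
    constructor
    · intro h
      have h2 : 2 ≤ k - m := by omega
      have h3 : n ≤ a n := hmono.le_apply
      constructor
      · constructor <;> omega
      · omega
    · rintro ⟨⟨hn, hle⟩, hg⟩
      omega
  rw [Finset.sum_congr rfl (fun m hm => by rw [hset m hm])]
  have hinner : ∀ m ∈ Finset.range (k+1),
      bG a m * ((Kfin a k).filter (fun n => k - (a n + 2) = m)).card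
        = ∑ n ∈ (Kfin a k).filter (fun n => k - (a n + 2) = m), bG a (k - (a n + 2)) := by
    intro m hm
    rw [Finset.sum_congr rfl (fun n hn => by rw [(Finset.mem_filter.1 hn).2]),
      Finset.sum_const, smul_eq_mul, mul_comm]
  rw [Finset.sum_congr rfl hinner]
  exact Finset.sum_fiberwise_of_maps_to
    (fun n _ => Finset.mem_range.2 (by omega)) (fun n => bG a (k - (a n + 2)))

lemma coeff_five (f : PowerSeries ℤ) (n : ℕ) :
    (PowerSeries.coeff n) (5 * f) = 5 * (PowerSeries.coeff n) f := by
  rw [show (5 : PowerSeries ℤ) = PowerSeries.C 5 from (map_ofNat _ 5).symm,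
    PowerSeries.coeff_C_mul]

lemma key_identity (p : ℕ) (hp : p.Prime) (hpos : ∀ n, 0 < a n) (hmono : StrictMono a) :
    (PowerSeries.mk fun n => (bG a n : ℤ)) *
      (1 - 5 * PowerSeries.X + 5 * PowerSeries.X ^ 2 +
        PowerSeries.mk fun k => (Set.ncard {n : ℕ | a n + 2 = k} : ℤ)) = 1 := by
  let b : PowerSeries ℤ := PowerSeries.mk fun n => (bG a n : ℤ)
  let c : PowerSeries ℤ := PowerSeries.mk fun k => (Set.ncard {n : ℕ | a n + 2 = k} : ℤ)
  show b * (1 - 5 * PowerSeries.X + 5 * PowerSeries.X ^ 2 + c) = 1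
  have hexp : b * (1 - 5 * PowerSeries.X + 5 * PowerSeries.X ^ 2 + c)
      = b - 5 * (b * PowerSeries.X ^ 1) + 5 * (b * PowerSeries.X ^ 2) + b * c := by
    ring
  rw [hexp]
  apply PowerSeries.ext
  intro k
  simp only [map_add, map_sub, coeff_five, PowerSeries.coeff_mul_X_pow', b, c,
    PowerSeries.coeff_mk, PowerSeries.coeff_one]
  rw [PowerSeries.coeff_mul, Finset.Nat.sum_antidiagonal_eq_sum_range_succ_mk]
  simp only [PowerSeries.coeff_mk]
  have hS : ∑ m ∈ Finset.range (k+1), (bG a m : ℤ) * ({n | a n + 2 = k - m}.ncard : ℤ)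
      = ((∑ n ∈ Kfin a k, bG a (k - (a n + 2)) : ℕ) : ℤ) := by
    rw [← sum_conv hmono k, Nat.cast_sum]
    exact Finset.sum_congr rfl (fun m _ => by push_cast; ring)
  rw [hS]
  rcases k with _ | k
  · simp [bG_zero hpos, Kfin]
  · rcases k with _ | m
    · -- k = 1
      have h1 : Kfin a 1 = ∅ := by
        ext n
        simp only [Kfin, Finset.mem_filter, Finset.mem_range, Finset.notMem_empty, iff_false]
        rintro ⟨-, h⟩
        omega
      have := bG_one (a := a) hpos
      simp [h1, this]
    · -- k = m + 2
      have hrec := bG_rec hpos hmono m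
      have h2 : ∀ n, m + 2 - (a n + 2) = m - a n := by intro n; omega
      rw [Finset.sum_congr rfl (fun n _ => by rw [h2 n])]
      have h5 : ((m:ℕ) + 1 + 1 ≠ 0) := by omega
      simp only [if_neg h5]
      have hif1 : (1 ≤ m + 1 + 1) := by omega
      have hif2 : (2 ≤ m + 1 + 1) := by omega
      rw [if_pos hif1, if_pos hif2]
      have : m + 1 + 1 - 1 = m + 1 := by omega
      rw [this]
      have : m + 1 + 1 - 2 = m := by omega
      rw [this]
      have hcast : ((bG a (m+2) : ℤ) + (5 * bG a m + (∑ n ∈ Kfin a (m+2), (bG a (m - a n) : ℕ) : ℕ))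
          = 5 * bG a (m+1)) := by
        exact_mod_cast congrArg (fun x : ℕ => (x : ℤ)) hrec
      push_cast at hcast ⊢
      linarith [hcast]

end Ex16

/-- (Example 1.6, Poincaré series.)  Let `(a_n)` be a strictly increasing sequence of
positive integers and let `C` be the two-sided ideal of `A = 𝔽_p⟨X_1, …, X_5⟩`
generated by `X_5X_3, X_4X_2, X_4X_3, X_5X_2, X_5X_1` and `X_5 X_4^{a_n} X_1` for all
`n`.  With `b n = dim_{𝔽_p}(A^{(n)}/(C ∩ A^{(n)}))`, one has
`(∑ b_n t^n) · (1 − 5t + 5t² + ∑_n t^{a_n + 2}) = 1` in `ℤ⟦t⟧`, the coefficient of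
`t^k` in `∑_n t^{a_n + 2}` being the number (0 or 1) of `n` with `a_n + 2 = k`. -/
theorem stmt_6 (p : ℕ) (hp : p.Prime)
    (a : ℕ → ℕ) (hpos : ∀ n, 0 < a n) (hmono : StrictMono a) :
    (PowerSeries.mk fun n =>
        (bcoef p (twoSidedSpan p
          (({mono p [4, 2], mono p [3, 1], mono p [3, 2], mono p [4, 1], mono p [4, 0]} :
              Set (FA p)) ∪
            {x | ∃ n : ℕ, x = mono p (4 :: (List.replicate (a n) 3 ++ [0]))})) n : ℤ)) *
      (1 - 5 * PowerSeries.X + 5 * PowerSeries.X ^ 2 +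
        PowerSeries.mk fun k => (Set.ncard {n : ℕ | a n + 2 = k} : ℤ)) = 1 := by
  have heq : (fun n => (bcoef p (twoSidedSpan p
      (({mono p [4, 2], mono p [3, 1], mono p [3, 2], mono p [4, 1], mono p [4, 0]} :
          Set (FA p)) ∪
        {x | ∃ n : ℕ, x = mono p (4 :: (List.replicate (a n) 3 ++ [0]))})) n : ℤ))
      = fun n => ((Ex16.bG a n : ℕ) : ℤ) := by
    funext n
    exact congrArg _ (Ex16.bcoef_eq_bG p n hp)
  rw [heq]
  exact Ex16.key_identity p hp hpos hmono
end
end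

section
/- Let d ≥ 1 and let F be a locally finite combinatorially free family of words over the alphabet {X_1,…,X_d} (locally finite meaning: for each k, only finitely many words of F have length k). For n ≥ 0 let c_n be the number of words of length n over {X_1,…,X_d} having no factor belonging to F, and for k ≥ 1 let r_k be the number of words of F of length k. Then (∑_{n≥0} c_n t^n) · (1 − d·t + ∑_{k≥1} r_k t^k) = 1 in the ring of formal power series ℤ⟦t⟧. -/
open List Finset

namespace AnickAux

/-- Splitting an infix of an append. -/
lemma infix_append_cases {α : Type*} {u x y : List α} (h : u <:+: x ++ y) :
    u <:+: x ∨ u <:+: y ∨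
      ∃ s p, s ≠ [] ∧ p ≠ [] ∧ u = s ++ p ∧ s <:+ x ∧ p <+: y := by
  obtain ⟨a, b, hab⟩ := h
  rw [List.append_assoc] at hab
  rcases List.append_eq_append_iff.mp hab with ⟨a', hx, h2⟩ | ⟨c', ha, hy⟩
  · rcases List.append_eq_append_iff.mp h2 with ⟨t, ha', hb⟩ | ⟨t, hu, hy⟩
    · left
      exact ⟨a, t, by rw [hx, ha', List.append_assoc]⟩
    · rcases eq_or_ne a' [] with rfl | ha'ne
      · right; left
        refine ⟨[], b, ?_⟩
        simp only [List.nil_append] at hu ⊢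
        rw [hy, hu]
      · rcases eq_or_ne t [] with rfl | htne
        · left
          refine ⟨a, [], ?_⟩
          rw [List.append_nil] at hu
          rw [hu, List.append_nil, hx]
        · right; right
          exact ⟨a', t, ha'ne, htne, hu, ⟨a, hx.symm⟩, ⟨b, hy.symm⟩⟩
  · right; left
    exact ⟨c', b, by rw [hy, List.append_assoc]⟩

variable {α : Type*}

/-- `w` has no factor in `F`. -/
def Good (F : Set (List α)) (w : List α) : Prop := ∀ u ∈ F, ¬ u <:+: w

lemma Good.of_infix {F : Set (List α)} {w v : List α} (hw : Good F w) (h : v <:+: w) :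
    Good F v := fun u hu h' => hw u hu (h'.trans h)

lemma good_nil {F : Set (List α)} (hne : ∀ w ∈ F, w ≠ []) : Good F [] := by
  intro u hu h
  exact hne u hu (List.eq_nil_of_infix_nil h)

/-- Uniqueness of the `F`-suffix. -/
lemma suffix_unique {F : Set (List α)} (hcf : CombFreeSet F) {w f f' : List α}
    (hf : f ∈ F) (hf' : f' ∈ F) (h : f <:+ w) (h' : f' <:+ w) : f = f' := by
  by_contra hne
  rcases le_total f.length f'.length with hl | hl
  · exact hcf.1 f hf f' hf' hne (List.suffix_of_suffix_length_le h h' hl).isInfix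
  · exact hcf.1 f' hf' f hf (Ne.symm hne) (List.suffix_of_suffix_length_le h' h hl).isInfix

/-- `dropLast (v ++ f)` is good when `v` is good and `f ∈ F`. -/
lemma good_dropLast_append {F : Set (List α)} (hne : ∀ w ∈ F, w ≠ [])
    (hcf : CombFreeSet F) {v f : List α} (hv : Good F v) (hf : f ∈ F) :
    Good F ((v ++ f).dropLast) := by
  have hfne : f ≠ [] := hne f hf
  rw [List.dropLast_append_of_ne_nil hfne]
  intro u hu hinf
  rcases infix_append_cases hinf with h1 | h2 | ⟨s, p, hs, hp, rfl, hsx, hpy⟩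
  · exact hv u hu h1
  · -- u infix of f.dropLast, hence infix of f
    have hufflt : u.length < f.length := by
      have h3 := h2.length_le
      have h4 : u.length ≤ f.length - 1 := by simpa [List.length_dropLast] using h3
      have hf1 : 1 ≤ f.length := List.length_pos_iff.mpr hfne
      omega
    have huf : u <:+: f := h2.trans (f.dropLast_prefix.isInfix)
    exact hcf.1 u hu f hf (by rintro rfl; omega) huf
  · -- middle case: p is a nonempty proper suffix of u and proper prefix of f
    have hpf : p <+: f := hpy.trans f.dropLast_prefix
    have hpnef : p ≠ f := by
      intro h
      have h3 := hpy.length_le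
      have hf1 : 1 ≤ f.length := List.length_pos_iff.mpr hfne
      rw [h] at h3
      simp only [List.length_dropLast] at h3
      omega
    have hpsuf : p <:+ s ++ p := List.suffix_append s p
    have hpneu : p ≠ s ++ p := by
      intro h
      apply hs
      have hl := congrArg List.length h
      rw [List.length_append] at hl
      have : s.length = 0 := by omega
      exact List.length_eq_zero_iff.mp this
    exact hcf.2 (s ++ p) hu f hf p hp hpsuf hpneu hpf hpnef

/-- If `dropLast w` is good and `u ∈ F` is an infix of `w`, then `u` is a suffix. -/
lemma suffix_of_infix_good_dropLast {F : Set (List α)} {w u : List α}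
    (hw : Good F w.dropLast) (hu : u ∈ F) (h : u <:+: w) : u <:+ w := by
  obtain ⟨a, b, hab⟩ := h
  rcases eq_or_ne b [] with rfl | hb
  · exact ⟨a, by simpa using hab⟩
  · exfalso
    apply hw u hu
    have hdl : w.dropLast = a ++ u ++ b.dropLast := by
      rw [← hab, List.dropLast_append_of_ne_nil hb]
    exact ⟨a, b.dropLast, hdl.symm⟩

variable {d : ℕ}

/-- All lists of a given length over `Fin d`, as a `Finset`. -/
def lenF (d : ℕ) : ℕ → Finset (List (Fin d))
  | 0 => {[]}
  | (m + 1) => (Finset.univ ×ˢ lenF d m).image (fun p => p.1 :: p.2)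

lemma mem_lenF {m : ℕ} {w : List (Fin d)} : w ∈ lenF d m ↔ w.length = m := by
  induction m generalizing w with
  | zero => simp [lenF, List.length_eq_zero_iff]
  | succ m ih =>
    cases w with
    | nil => simp [lenF]
    | cons a w => simp [lenF, ih]

open scoped Classical in
/-- Good words of length `n`, as a `Finset`. -/
noncomputable def goodT (F : Set (List (Fin d))) (n : ℕ) : Finset (List (Fin d)) :=
  (lenF d n).filter (Good F)

lemma mem_goodT {F : Set (List (Fin d))} {n : ℕ} {w : List (Fin d)} :
    w ∈ goodT F n ↔ w.length = n ∧ Good F w := by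
  classical
  simp [goodT, mem_lenF]

lemma goodT_zero {F : Set (List (Fin d))} (hne : ∀ w ∈ F, w ≠ []) :
    goodT F 0 = {[]} := by
  ext w
  simp only [mem_goodT, Finset.mem_singleton, List.length_eq_zero_iff]
  constructor
  · exact fun h => h.1
  · rintro rfl; exact ⟨rfl, good_nil hne⟩

/-- The key recurrence. -/
lemma key_recurrence {F : Set (List (Fin d))}
    (hne : ∀ w ∈ F, w ≠ [])
    (hlf : ∀ k : ℕ, {w ∈ F | w.length = k}.Finite)
    (hcf : CombFreeSet F) (n : ℕ) :
    d * (goodT F n).card =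
      (goodT F (n + 1)).card +
        ∑ j ∈ Finset.range (n + 1),
          (hlf (j + 1)).toFinset.card * (goodT F (n - j)).card := by
  classical
  -- the set of words of length n+1 whose dropLast is good
  set S : Finset (List (Fin d)) :=
    (lenF d (n + 1)).filter (fun w => Good F w.dropLast) with hS
  have memS : ∀ w, w ∈ S ↔ w.length = n + 1 ∧ Good F w.dropLast := by
    intro w; simp [hS, mem_lenF]
  -- Step 1: S.card = d * (goodT F n).card
  have h1 : S.card = d * (goodT F n).card := by
    have himg : S = (Finset.univ ×ˢ goodT F n).image
        (fun p : Fin d × List (Fin d) => p.2 ++ [p.1]) := by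
      ext w
      rw [memS]
      simp only [Finset.mem_image, Finset.mem_product, Finset.mem_univ, true_and, mem_goodT,
        Prod.exists]
      constructor
      · rintro ⟨hlen, hgood⟩
        have hwne : w ≠ [] := by
          intro h; rw [h] at hlen; simp at hlen
        refine ⟨w.getLast hwne, w.dropLast, ⟨?_, hgood⟩, List.dropLast_append_getLast hwne⟩
        simp [List.length_dropLast, hlen]
      · rintro ⟨x, v, ⟨hlen, hgood⟩, rfl⟩
        constructor
        · simp [hlen]
        · rwa [List.dropLast_concat]
    rw [himg, Finset.card_image_of_injOn, Finset.card_product, Finset.card_univ,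
      Fintype.card_fin]
    intro p _ q _ h
    simp only at h
    obtain ⟨h1, h2⟩ := List.append_inj' h (by simp)
    simp only [List.cons.injEq] at h2
    exact Prod.ext h2.1 h1
  -- Step 2: split S into good words and bad words
  have h2 : S.card = (goodT F (n + 1)).card + (S.filter (fun w => ¬ Good F w)).card := by
    have hflt : S.filter (fun w => Good F w) = goodT F (n + 1) := by
      ext w
      simp only [Finset.mem_filter, memS, mem_goodT]
      constructor
      · rintro ⟨⟨hlen, _⟩, hg⟩; exact ⟨hlen, hg⟩
      · rintro ⟨hlen, hg⟩
        exact ⟨⟨hlen, hg.of_infix (w.dropLast_prefix.isInfix)⟩, hg⟩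
    rw [← hflt]
    exact (Finset.card_filter_add_card_filter_not (p := fun w => Good F w)).symm
  -- Step 3: bad words biject with pairs (good word, F-word)
  have h3 : (S.filter (fun w => ¬ Good F w)).card =
      ∑ j ∈ Finset.range (n + 1),
        (hlf (j + 1)).toFinset.card * (goodT F (n - j)).card := by
    have hbU : S.filter (fun w => ¬ Good F w) =
        (Finset.range (n + 1)).biUnion (fun j =>
          (goodT F (n - j) ×ˢ (hlf (j + 1)).toFinset).image
            (fun p : List (Fin d) × List (Fin d) => p.1 ++ p.2)) := by
      ext w
      simp only [Finset.mem_filter, memS, Finset.mem_biUnion, Finset.mem_range,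
        Finset.mem_image, Finset.mem_product, mem_goodT, Set.Finite.mem_toFinset,
        Set.mem_setOf_eq, Prod.exists]
      constructor
      · rintro ⟨⟨hlen, hgd⟩, hbad⟩
        rw [Good] at hbad
        push_neg at hbad
        obtain ⟨u, hu, hinf⟩ := hbad
        have hsuf : u <:+ w := suffix_of_infix_good_dropLast hgd hu hinf
        obtain ⟨v, rfl⟩ := hsuf
        have hune : u ≠ [] := hne u hu
        have hulen : 1 ≤ u.length := List.length_pos_iff.mpr hune
        have hvlen : v.length + u.length = n + 1 := by
          simpa using hlen
        refine ⟨u.length - 1, by omega, v, u, ⟨⟨?_, ?_⟩, hu, by omega⟩, rfl⟩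
        · omega
        · -- v is good: it's a prefix of dropLast (v ++ u)
          refine hgd.of_infix ?_
          have hvpre : v <+: (v ++ u).dropLast := by
            rw [List.dropLast_append_of_ne_nil hune]
            exact List.prefix_append v u.dropLast
          exact hvpre.isInfix
      · rintro ⟨j, hj, v, f, ⟨⟨hvlen, hvgood⟩, hf, hflen⟩, rfl⟩
        refine ⟨⟨?_, good_dropLast_append hne hcf hvgood hf⟩, ?_⟩
        · rw [List.length_append, hvlen, hflen]; omega
        · intro hg
          exact hg f hf ⟨v, [], by simp⟩
    rw [hbU, Finset.card_biUnion]
    · refine Finset.sum_congr rfl fun j _ => ?_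
      rw [Finset.card_image_of_injOn, Finset.card_product, mul_comm]
      rintro ⟨v, f⟩ hvf ⟨v', f'⟩ hvf' h
      simp only [Finset.mem_coe, Finset.mem_product, mem_goodT, Set.Finite.mem_toFinset,
        Set.mem_setOf_eq] at hvf hvf'
      simp only at h
      obtain ⟨h1, h2⟩ := List.append_inj' h (by rw [hvf.2.2, hvf'.2.2])
      exact Prod.ext h1 h2
    · -- pairwise disjoint: uniqueness of F-suffix
      intro j _ j' _ hjj'
      rw [Function.onFun, Finset.disjoint_left]
      intro w hw hw'
      simp only [Finset.mem_image, Finset.mem_product, mem_goodT, Set.Finite.mem_toFinset,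
        Set.mem_setOf_eq, Prod.exists] at hw hw'
      obtain ⟨v, f, ⟨⟨hvlen, _⟩, hf, hflen⟩, hweq⟩ := hw
      obtain ⟨v', f', ⟨⟨hvlen', _⟩, hf', hflen'⟩, hweq'⟩ := hw'
      have hff' : f = f' := suffix_unique hcf hf hf' ⟨v, hweq⟩ ⟨v', hweq'⟩
      rw [hff'] at hflen
      apply hjj'
      omega
  omega

end AnickAux

open AnickAux

/-- (Combinatorial content of Anick's theorem.)  Let `F` be a locally finite
combinatorially free family of (nonempty) words over a `d`-letter alphabet.  Let
`c n` be the number of words of length `n` having no factor in `F`, and `r k` the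
number of words of `F` of length `k`.  Then
`(∑ c_n t^n) · (1 − d t + ∑_{k ≥ 1} r_k t^k) = 1` in `ℤ⟦t⟧`. -/
theorem stmt_12 (d : ℕ) (hd : 1 ≤ d) (F : Set (List (Fin d)))
    (hne : ∀ w ∈ F, w ≠ [])
    (hlf : ∀ k : ℕ, {w ∈ F | w.length = k}.Finite)
    (hcf : CombFreeSet F) :
    (PowerSeries.mk fun n =>
        (Set.ncard {w : List (Fin d) | w.length = n ∧ ∀ u ∈ F, ¬ u <:+: w} : ℤ)) *
      (1 - PowerSeries.C (d : ℤ) * PowerSeries.X +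
        PowerSeries.mk fun k =>
          if k = 0 then 0 else (Set.ncard {w ∈ F | w.length = k} : ℤ)) = 1 := by
  classical
  have hc : ∀ n : ℕ,
      Set.ncard {w : List (Fin d) | w.length = n ∧ ∀ u ∈ F, ¬ u <:+: w} = (goodT F n).card := by
    intro n
    rw [← Set.ncard_coe_finset]
    congr 1
    ext w
    simp [mem_goodT, Good]
  have hr : ∀ k : ℕ, Set.ncard {w ∈ F | w.length = k} = (hlf k).toFinset.card := by
    intro k
    rw [← Set.ncard_coe_finset]
    congr 1
    simp [Set.Finite.coe_toFinset]
  have hc0 : (goodT F 0).card = 1 := by rw [goodT_zero hne]; simp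
  ext n
  rw [PowerSeries.coeff_mul, PowerSeries.coeff_one]
  simp only [map_add, map_sub, PowerSeries.coeff_one, PowerSeries.coeff_C_mul,
    PowerSeries.coeff_X, PowerSeries.coeff_mk, hc, hr]
  rw [Finset.Nat.sum_antidiagonal_eq_sum_range_succ_mk]
  cases n with
  | zero => simp [hc0]
  | succ m =>
    have hkey := key_recurrence hne hlf hcf m
    rw [if_neg (Nat.succ_ne_zero m), Finset.sum_range_succ, Finset.sum_range_succ]
    have e1 : m + 1 - m = 1 := by omega
    rw [e1, Nat.sub_self]
    have hmain : (∑ i ∈ Finset.range m, ((goodT F i).card : ℤ) *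
        ((if m + 1 - i = 0 then (1:ℤ) else 0) -
          (d : ℤ) * (if m + 1 - i = 1 then 1 else 0) +
          (if m + 1 - i = 0 then 0 else ((hlf (m + 1 - i)).toFinset.card : ℤ)))) =
        ∑ i ∈ Finset.range m, ((goodT F i).card : ℤ) *
          ((hlf (m + 1 - i)).toFinset.card : ℤ) := by
      refine Finset.sum_congr rfl fun i hi => ?_
      rw [Finset.mem_range] at hi
      have h0 : m + 1 - i ≠ 0 := by omega
      have h1 : m + 1 - i ≠ 1 := by omega
      simp [h0, h1]
    rw [hmain]
    have hsum : (∑ i ∈ Finset.range (m + 1), ((goodT F i).card : ℤ) *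
          ((hlf (m + 1 - i)).toFinset.card : ℤ)) =
        ∑ j ∈ Finset.range (m + 1),
          ((hlf (j + 1)).toFinset.card : ℤ) * ((goodT F (m - j)).card : ℤ) := by
      rw [← Finset.sum_range_reflect]
      refine Finset.sum_congr rfl fun j hj => ?_
      rw [Finset.mem_range] at hj
      have ha : m + 1 - 1 - j = m - j := by omega
      have hb : m + 1 - (m - j) = j + 1 := by omega
      rw [ha, hb, mul_comm]
    have hpeel : (∑ i ∈ Finset.range (m + 1), ((goodT F i).card : ℤ) *
          ((hlf (m + 1 - i)).toFinset.card : ℤ)) =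
        (∑ i ∈ Finset.range m, ((goodT F i).card : ℤ) *
          ((hlf (m + 1 - i)).toFinset.card : ℤ)) +
        ((goodT F m).card : ℤ) * ((hlf 1).toFinset.card : ℤ) := by
      rw [Finset.sum_range_succ, e1]
    have hkeyz : (d : ℤ) * ((goodT F m).card : ℤ) =
        ((goodT F (m + 1)).card : ℤ) +
          ∑ j ∈ Finset.range (m + 1),
            ((hlf (j + 1)).toFinset.card : ℤ) * ((goodT F (m - j)).card : ℤ) := by
      exact_mod_cast congrArg (Nat.cast : ℕ → ℤ) hkey
    norm_num
    linear_combination hsum - hpeel - hkeyz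
end

section
/- Let p be a prime, A = 𝔽_p⟨X_1,…,X_5⟩, and let C be the two-sided ideal of A generated by the monomials X_5X_1, X_5X_2, X_4X_3, X_4X_2, X_5X_3 and X_5 X_4^n X_1 for all n ∈ ℤ_{>0}. Setting b_n = dim_{𝔽_p}(A^{(n)}/(C ∩ A^{(n)})), the identity (∑_{n≥0} b_n t^n) · (1 − 5t + 5t² + ∑_{k≥3} t^k) = 1 holds in ℤ⟦t⟧; equivalently, the Poincaré series of A/C equals (1 − 5t + 5t² + t³(1 + t + t² + ⋯))^{−1}. -/
noncomputable section

namespace S13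

inductive St | N | T | F deriving DecidableEq

instance : Fintype St := ⟨{St.N, St.T, St.F}, fun x => by cases x <;> decide⟩

open St

def step : St → Fin 5 → Option St := fun s c =>
  match s, c.val with
  | N, 0 => some N
  | N, 1 => some N
  | N, 2 => some N
  | N, 3 => some T
  | N, 4 => some F
  | N, _ => none
  | T, 0 => some N
  | T, 3 => some T
  | T, 4 => some F
  | T, _ => none
  | F, 3 => some F
  | F, 4 => some F
  | F, _ => none

def run (w : List (Fin 5)) : Option St :=
  w.foldl (fun o c => o.bind (fun s => step s c)) (some N)

@[simp] lemma run_nil : run [] = some N := rfl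

lemma run_snoc (w : List (Fin 5)) (c : Fin 5) :
    run (w ++ [c]) = (run w).bind (fun s => step s c) := by
  simp [run, List.foldl_append]

def GW : Set (List (Fin 5)) :=
  {[4,0],[4,1],[3,2],[3,1],[4,2]} ∪
    {l | ∃ n : ℕ, 0 < n ∧ l = 4 :: (List.replicate n 3 ++ [0])}

def Bad (w : List (Fin 5)) : Prop := ∃ g ∈ GW, g <:+: w

lemma GW_ne_nil {g : List (Fin 5)} (hg : g ∈ GW) : g ≠ [] := by
  rcases hg with (h|h|h|h|h) | ⟨n, hn, h⟩ <;> subst h <;> simp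

lemma snoc_inj {x y : List (Fin 5)} {a b : Fin 5} (h : x ++ [a] = y ++ [b]) :
    x = y ∧ a = b := by
  have := congrArg List.reverse h
  simp at this
  exact ⟨by simpa using congrArg List.reverse this.2, this.1⟩

lemma suffix_snoc_iff {x y : List (Fin 5)} {a b : Fin 5} :
    x ++ [a] <:+ y ++ [b] ↔ a = b ∧ x <:+ y := by
  constructor
  · rintro ⟨s, hs⟩
    rw [← List.append_assoc] at hs
    obtain ⟨h1, h2⟩ := snoc_inj hs
    exact ⟨h2, s, h1⟩
  · rintro ⟨rfl, s, rfl⟩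
    exact ⟨s, by simp⟩

lemma infix_snoc {g w : List (Fin 5)} {c : Fin 5} (h : g <:+: w ++ [c]) :
    g <:+: w ∨ g <:+ w ++ [c] := by
  rcases h with ⟨s, t, hst⟩
  rcases t.eq_nil_or_concat' with rfl | ⟨t', c', rfl⟩
  · right; exact ⟨s, by simpa using hst⟩
  · left
    rw [← List.append_assoc] at hst
    obtain ⟨h1, -⟩ := snoc_inj hst
    exact ⟨s, t', h1⟩

lemma bad_snoc {w : List (Fin 5)} {c : Fin 5} :
    Bad (w ++ [c]) ↔ Bad w ∨ ∃ g ∈ GW, g <:+ w ++ [c] := by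
  constructor
  · rintro ⟨g, hg, hi⟩
    rcases infix_snoc hi with h | h
    · exact Or.inl ⟨g, hg, h⟩
    · exact Or.inr ⟨g, hg, h⟩
  · rintro (⟨g, hg, hi⟩ | ⟨g, hg, hs⟩)
    · exact ⟨g, hg, hi.trans (List.prefix_append w [c]).isInfix⟩
    · exact ⟨g, hg, hs.isInfix⟩

lemma suffix_getLast? {l w : List (Fin 5)} (h : l <:+ w) (hl : l ≠ []) :
    w.getLast? = l.getLast? := by
  rcases h with ⟨s, rfl⟩
  exact List.getLast?_append_of_ne_nil s hl

lemma getLast?_4rep (k : ℕ) :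
    ((4 :: List.replicate k 3 : List (Fin 5))).getLast? = some 3 ∨
    ((4 :: List.replicate k 3 : List (Fin 5))).getLast? = some 4 := by
  cases k with
  | zero => right; rfl
  | succ k =>
      left
      rw [List.replicate_succ', ← List.cons_append, List.getLast?_concat]

lemma exists_concat_of_getLast? {w : List (Fin 5)} {a : Fin 5}
    (h : w.getLast? = some a) : ∃ u, w = u ++ [a] := by
  rcases w.eq_nil_or_concat' with rfl | ⟨u, b, rfl⟩
  · simp at h
  · rw [List.getLast?_concat] at h
    exact ⟨u, by simp at h; rw [h]⟩

/-- `P0 w`: no suffix of the form `4 3^k`. -/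
def P0 (w : List (Fin 5)) : Prop :=
  ∀ k : ℕ, ¬ ((4 :: List.replicate k 3 : List (Fin 5)) <:+ w)

lemma fourRep_snoc (k : ℕ) :
    (4 :: List.replicate (k+1) 3 : List (Fin 5)) = (4 :: List.replicate k 3) ++ [3] := by
  rw [List.replicate_succ', ← List.cons_append]

lemma P0_of_le2 {w : List (Fin 5)} (h : ∀ c, w.getLast? = some c → c.val ≤ 2) :
    P0 w := by
  intro k hk
  have hne : (4 :: List.replicate k 3 : List (Fin 5)) ≠ [] := by simp
  have := suffix_getLast? hk hne
  rcases getLast?_4rep k with h3 | h3 <;> rw [h3] at this <;>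
    exact absurd (h _ this) (by decide)

lemma no_suffix_single_of_le2 {w : List (Fin 5)} {a : Fin 5}
    (h : ∀ c, w.getLast? = some c → c.val ≤ 2) (ha : 3 ≤ a.val) : ¬ ([a] <:+ w) := by
  intro hs
  have := suffix_getLast? hs (by simp)
  simp at this
  exact absurd (h _ this) (by omega)

lemma P0_snoc3 {w : List (Fin 5)} (h : P0 w) :
    P0 (w ++ [3]) := by
  intro k hk
  cases k with
  | zero =>
      have := suffix_snoc_iff.mp (show ([] : List (Fin 5)) ++ [4] <:+ w ++ [3] from hk)
      exact absurd this.1 (by decide)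
  | succ k =>
      rw [fourRep_snoc] at hk
      exact h k (suffix_snoc_iff.mp hk).2

lemma GW_elim {g : List (Fin 5)} (hg : g ∈ GW) :
    g = [4,0] ∨ g = [4,1] ∨ g = [3,2] ∨ g = [3,1] ∨ g = [4,2] ∨
      ∃ n, 0 < n ∧ g = 4 :: (List.replicate n 3 ++ [0]) := by
  rcases hg with (h|h|h|h|h) | ⟨n, hn, h⟩
  · exact Or.inl h
  · exact Or.inr (Or.inl h)
  · exact Or.inr (Or.inr (Or.inl h))
  · exact Or.inr (Or.inr (Or.inr (Or.inl h)))
  · exact Or.inr (Or.inr (Or.inr (Or.inr (Or.inl h))))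
  · exact Or.inr (Or.inr (Or.inr (Or.inr (Or.inr ⟨n, hn, h⟩))))

lemma family_eq (n : ℕ) :
    (4 :: (List.replicate n 3 ++ [0]) : List (Fin 5)) = (4 :: List.replicate n 3) ++ [0] := by
  simp

/-- Which suffix patterns in `GW` can end at a freshly appended letter `c`. -/
lemma bad_suffix_elim {w : List (Fin 5)} {c : Fin 5}
    (h : ∃ g ∈ GW, g <:+ w ++ [c]) :
    (c = 0 ∧ ∃ k, (4 :: List.replicate k 3 : List (Fin 5)) <:+ w) ∨
    ((c = 1 ∨ c = 2) ∧ ([3] <:+ w ∨ [4] <:+ w)) := by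
  obtain ⟨g, hg, hs⟩ := h
  rcases GW_elim hg with rfl | rfl | rfl | rfl | rfl | ⟨n, hn, rfl⟩
  · have := suffix_snoc_iff.mp (show [4] ++ [0] <:+ w ++ [c] from hs)
    exact Or.inl ⟨this.1.symm, 0, this.2⟩
  · have := suffix_snoc_iff.mp (show [4] ++ [1] <:+ w ++ [c] from hs)
    exact Or.inr ⟨Or.inl this.1.symm, Or.inr this.2⟩
  · have := suffix_snoc_iff.mp (show [3] ++ [2] <:+ w ++ [c] from hs)
    exact Or.inr ⟨Or.inr this.1.symm, Or.inl this.2⟩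
  · have := suffix_snoc_iff.mp (show [3] ++ [1] <:+ w ++ [c] from hs)
    exact Or.inr ⟨Or.inl this.1.symm, Or.inl this.2⟩
  · have := suffix_snoc_iff.mp (show [4] ++ [2] <:+ w ++ [c] from hs)
    exact Or.inr ⟨Or.inr this.1.symm, Or.inr this.2⟩
  · rw [family_eq] at hs
    have := suffix_snoc_iff.mp hs
    exact Or.inl ⟨this.1.symm, n, this.2⟩

lemma mem_GW_40 : ([4,0] : List (Fin 5)) ∈ GW := Or.inl (by simp)
lemma mem_GW_41 : ([4,1] : List (Fin 5)) ∈ GW := Or.inl (by simp)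
lemma mem_GW_32 : ([3,2] : List (Fin 5)) ∈ GW := Or.inl (by simp)
lemma mem_GW_31 : ([3,1] : List (Fin 5)) ∈ GW := Or.inl (by simp)
lemma mem_GW_42 : ([4,2] : List (Fin 5)) ∈ GW := Or.inl (by simp)
lemma mem_GW_family {n : ℕ} (hn : 0 < n) :
    (4 :: (List.replicate n 3 ++ [0]) : List (Fin 5)) ∈ GW := Or.inr ⟨n, hn, rfl⟩

lemma suffix_pair_of_getLast? {w : List (Fin 5)} {a : Fin 5} (c : Fin 5)
    (h : w.getLast? = some a) : ([a, c] : List (Fin 5)) <:+ w ++ [c] := by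
  obtain ⟨u, rfl⟩ := exists_concat_of_getLast? h
  exact (suffix_snoc_iff (x := [a])).mpr ⟨rfl, ⟨u, rfl⟩⟩

lemma suffix_single_snoc (w : List (Fin 5)) (c : Fin 5) : [c] <:+ w ++ [c] :=
  ⟨w, rfl⟩


/-- The main automaton invariant. -/
lemma main (w : List (Fin 5)) :
    (run w = none ↔ Bad w) ∧
    (run w = some N → ∀ c, w.getLast? = some c → c.val ≤ 2) ∧
    (run w = some T → w.getLast? = some 3 ∧ P0 w) ∧
    (run w = some F → ∃ k, (4 :: List.replicate k 3 : List (Fin 5)) <:+ w) := by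
  induction w using List.reverseRecOn with
  | nil =>
      refine ⟨⟨fun h => by simp [run] at h, fun ⟨g, hg, hi⟩ => ?_⟩, ?_, ?_, ?_⟩
      · exact absurd (List.eq_nil_of_infix_nil hi) (GW_ne_nil hg)
      · intro _ c hc; simp at hc
      · intro h; simp [run] at h
      · intro h; simp [run] at h
  | append_singleton w c ih =>
      obtain ⟨ih0, ihN, ihT, ihF⟩ := ih
      rw [run_snoc]
      cases hrw : run w with
      | none =>
          have hbw : Bad w := ih0.mp hrw
          simp only [Option.bind_none]
          exact ⟨iff_of_true trivial (bad_snoc.mpr (Or.inl hbw)), by simp, by simp, by simp⟩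
      | some s =>
          have hnb : ¬ Bad w := fun hb => by rw [ih0.mpr hb] at hrw; cases hrw
          simp only [Option.bind_some]
          -- helper: goal builder for a successful transition
          cases s with
          | N =>
              have hN := ihN hrw
              have hP0 : P0 w := P0_of_le2 hN
              have hno : ∀ c' : Fin 5, ¬ ∃ g ∈ GW, g <:+ w ++ [c'] := by
                intro c' hex
                rcases bad_suffix_elim hex with ⟨-, k, hk⟩ | ⟨-, h3 | h4⟩
                · exact hP0 k hk
                · exact no_suffix_single_of_le2 hN (by decide) h3
                · exact no_suffix_single_of_le2 hN (by decide) h4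
              have hnb' : ∀ c' : Fin 5, ¬ Bad (w ++ [c']) := fun c' hb => by
                rcases bad_snoc.mp hb with h | h
                · exact hnb h
                · exact hno c' h
              fin_cases c
              · -- c = 0, step N 0 = some N
                refine ⟨⟨fun h => absurd h (by decide), fun hb => absurd hb (hnb' 0)⟩, ?_, ?_, ?_⟩
                · intro _ c' hc'; rw [List.getLast?_concat] at hc'
                  cases hc'; decide
                · intro h; exact absurd h (by decide)
                · intro h; exact absurd h (by decide)
              · refine ⟨⟨fun h => absurd h (by decide), fun hb => absurd hb (hnb' 1)⟩, ?_, ?_, ?_⟩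
                · intro _ c' hc'; rw [List.getLast?_concat] at hc'
                  cases hc'; decide
                · intro h; exact absurd h (by decide)
                · intro h; exact absurd h (by decide)
              · refine ⟨⟨fun h => absurd h (by decide), fun hb => absurd hb (hnb' 2)⟩, ?_, ?_, ?_⟩
                · intro _ c' hc'; rw [List.getLast?_concat] at hc'
                  cases hc'; decide
                · intro h; exact absurd h (by decide)
                · intro h; exact absurd h (by decide)
              · -- c = 3, → T
                refine ⟨⟨fun h => absurd h (by decide), fun hb => absurd hb (hnb' 3)⟩, ?_, ?_, ?_⟩
                · intro h; exact absurd h (by decide)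
                · intro _; exact ⟨List.getLast?_concat, P0_snoc3 hP0⟩
                · intro h; exact absurd h (by decide)
              · -- c = 4, → F
                refine ⟨⟨fun h => absurd h (by decide), fun hb => absurd hb (hnb' 4)⟩, ?_, ?_, ?_⟩
                · intro h; exact absurd h (by decide)
                · intro h; exact absurd h (by decide)
                · intro _; exact ⟨0, suffix_single_snoc w 4⟩
          | T =>
              obtain ⟨hT3, hP0⟩ := ihT hrw
              fin_cases c
              · -- c = 0 → N: no bad suffix since P0
                have hno : ¬ ∃ g ∈ GW, g <:+ w ++ [(0 : Fin 5)] := by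
                  intro hex
                  rcases bad_suffix_elim hex with ⟨-, k, hk⟩ | ⟨hc, -⟩
                  · exact hP0 k hk
                  · rcases hc with h | h <;> exact absurd h (by decide)
                refine ⟨⟨fun h => absurd h (by decide), fun hb => ?_⟩, ?_, ?_, ?_⟩
                · rcases bad_snoc.mp hb with h | h
                  · exact absurd h hnb
                  · exact absurd h hno
                · intro _ c' hc'; rw [List.getLast?_concat] at hc'
                  cases hc'; decide
                · intro h; exact absurd h (by decide)
                · intro h; exact absurd h (by decide)
              · -- c = 1 → bad
                have hbad : Bad (w ++ [(1 : Fin 5)]) :=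
                  bad_snoc.mpr (Or.inr ⟨[3,1], mem_GW_31, suffix_pair_of_getLast? 1 hT3⟩)
                exact ⟨iff_of_true (by decide) hbad, fun h => absurd h (by decide),
                  fun h => absurd h (by decide), fun h => absurd h (by decide)⟩
              · -- c = 2 → bad
                have hbad : Bad (w ++ [(2 : Fin 5)]) :=
                  bad_snoc.mpr (Or.inr ⟨[3,2], mem_GW_32, suffix_pair_of_getLast? 2 hT3⟩)
                exact ⟨iff_of_true (by decide) hbad, fun h => absurd h (by decide),
                  fun h => absurd h (by decide), fun h => absurd h (by decide)⟩
              · -- c = 3 → T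
                have hno : ¬ ∃ g ∈ GW, g <:+ w ++ [(3 : Fin 5)] := by
                  intro hex
                  rcases bad_suffix_elim hex with ⟨hc, -⟩ | ⟨hc, -⟩
                  · exact absurd hc (by decide)
                  · rcases hc with h | h <;> exact absurd h (by decide)
                refine ⟨⟨fun h => absurd h (by decide), fun hb => ?_⟩, ?_, ?_, ?_⟩
                · rcases bad_snoc.mp hb with h | h
                  · exact absurd h hnb
                  · exact absurd h hno
                · intro h; exact absurd h (by decide)
                · intro _; exact ⟨List.getLast?_concat, P0_snoc3 hP0⟩
                · intro h; exact absurd h (by decide)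
              · -- c = 4 → F
                have hno : ¬ ∃ g ∈ GW, g <:+ w ++ [(4 : Fin 5)] := by
                  intro hex
                  rcases bad_suffix_elim hex with ⟨hc, -⟩ | ⟨hc, -⟩
                  · exact absurd hc (by decide)
                  · rcases hc with h | h <;> exact absurd h (by decide)
                refine ⟨⟨fun h => absurd h (by decide), fun hb => ?_⟩, ?_, ?_, ?_⟩
                · rcases bad_snoc.mp hb with h | h
                  · exact absurd h hnb
                  · exact absurd h hno
                · intro h; exact absurd h (by decide)
                · intro h; exact absurd h (by decide)
                · intro _; exact ⟨0, suffix_single_snoc w 4⟩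
          | F =>
              obtain ⟨k, hk⟩ := ihF hrw
              have hlast : w.getLast? = some 3 ∨ w.getLast? = some 4 := by
                have := suffix_getLast? hk (by simp)
                rw [this]; exact getLast?_4rep k
              fin_cases c
              · -- c = 0 → bad: 4 3^k 0
                have hbad : Bad (w ++ [(0 : Fin 5)]) := by
                  refine bad_snoc.mpr (Or.inr ⟨(4 :: List.replicate k 3) ++ [0], ?_, ?_⟩)
                  · cases k with
                    | zero => exact mem_GW_40
                    | succ k => rw [← family_eq]; exact mem_GW_family (Nat.succ_pos k)
                  · exact suffix_snoc_iff.mpr ⟨rfl, hk⟩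
                exact ⟨iff_of_true (by decide) hbad, fun h => absurd h (by decide),
                  fun h => absurd h (by decide), fun h => absurd h (by decide)⟩
              · -- c = 1 → bad
                have hbad : Bad (w ++ [(1 : Fin 5)]) := by
                  rcases hlast with h | h
                  · exact bad_snoc.mpr (Or.inr ⟨[3,1], mem_GW_31, suffix_pair_of_getLast? 1 h⟩)
                  · exact bad_snoc.mpr (Or.inr ⟨[4,1], mem_GW_41, suffix_pair_of_getLast? 1 h⟩)
                exact ⟨iff_of_true (by decide) hbad, fun h => absurd h (by decide),
                  fun h => absurd h (by decide), fun h => absurd h (by decide)⟩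
              · -- c = 2 → bad
                have hbad : Bad (w ++ [(2 : Fin 5)]) := by
                  rcases hlast with h | h
                  · exact bad_snoc.mpr (Or.inr ⟨[3,2], mem_GW_32, suffix_pair_of_getLast? 2 h⟩)
                  · exact bad_snoc.mpr (Or.inr ⟨[4,2], mem_GW_42, suffix_pair_of_getLast? 2 h⟩)
                exact ⟨iff_of_true (by decide) hbad, fun h => absurd h (by decide),
                  fun h => absurd h (by decide), fun h => absurd h (by decide)⟩
              · -- c = 3 → F
                have hno : ¬ ∃ g ∈ GW, g <:+ w ++ [(3 : Fin 5)] := by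
                  intro hex
                  rcases bad_suffix_elim hex with ⟨hc, -⟩ | ⟨hc, -⟩
                  · exact absurd hc (by decide)
                  · rcases hc with h | h <;> exact absurd h (by decide)
                refine ⟨⟨fun h => absurd h (by decide), fun hb => ?_⟩, ?_, ?_, ?_⟩
                · rcases bad_snoc.mp hb with h | h
                  · exact absurd h hnb
                  · exact absurd h hno
                · intro h; exact absurd h (by decide)
                · intro h; exact absurd h (by decide)
                · intro _
                  exact ⟨k + 1, by rw [fourRep_snoc]; exact suffix_snoc_iff.mpr ⟨rfl, hk⟩⟩
              · -- c = 4 → F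
                have hno : ¬ ∃ g ∈ GW, g <:+ w ++ [(4 : Fin 5)] := by
                  intro hex
                  rcases bad_suffix_elim hex with ⟨hc, -⟩ | ⟨hc, -⟩
                  · exact absurd hc (by decide)
                  · rcases hc with h | h <;> exact absurd h (by decide)
                refine ⟨⟨fun h => absurd h (by decide), fun hb => ?_⟩, ?_, ?_, ?_⟩
                · rcases bad_snoc.mp hb with h | h
                  · exact absurd h hnb
                  · exact absurd h hno
                · intro h; exact absurd h (by decide)
                · intro h; exact absurd h (by decide)
                · intro _; exact ⟨0, suffix_single_snoc w 4⟩

lemma run_eq_none_iff_bad (w : List (Fin 5)) : run w = none ↔ Bad w := (main w).1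


/-! ### Counting -/

def W : ℕ → Finset (List (Fin 5))
  | 0 => {[]}
  | n+1 => ((W n) ×ˢ (Finset.univ : Finset (Fin 5))).image fun p => p.1 ++ [p.2]

lemma W_zero : W 0 = {[]} := rfl

lemma W_succ (n : ℕ) :
    W (n+1) = ((W n) ×ˢ (Finset.univ : Finset (Fin 5))).image fun p => p.1 ++ [p.2] := rfl

lemma e_inj : Function.Injective (fun p : List (Fin 5) × Fin 5 => p.1 ++ [p.2]) := by
  rintro ⟨x, a⟩ ⟨y, b⟩ h
  obtain ⟨h1, h2⟩ := snoc_inj h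
  simp only [Prod.mk.injEq]
  exact ⟨h1, h2⟩

lemma mem_W {n : ℕ} {w : List (Fin 5)} : w ∈ W n ↔ w.length = n := by
  induction n generalizing w with
  | zero => rw [W_zero]; simp [List.length_eq_zero_iff]
  | succ n ih =>
      rw [W_succ]
      simp only [Finset.mem_image, Finset.mem_product]
      constructor
      · rintro ⟨⟨u, c⟩, ⟨hu, -⟩, rfl⟩
        simp [ih.mp hu]
      · intro hw
        rcases w.eq_nil_or_concat' with rfl | ⟨u, c, rfl⟩
        · simp at hw
        · refine ⟨(u, c), ⟨ih.mpr ?_, Finset.mem_univ _⟩, rfl⟩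
          rw [List.length_append, List.length_singleton] at hw
          show u.length = n
          omega

def cnt (n : ℕ) (o : Option St) : ℕ := ((W n).filter (fun w => run w = o)).card

lemma cnt_succ (n : ℕ) (o : Option St) :
    cnt (n+1) o = ∑ o' ∈ (Finset.univ : Finset (Option St)),
      cnt n o' *
        ((Finset.univ : Finset (Fin 5)).filter
          (fun c => o'.bind (fun s => step s c) = o)).card := by
  have h1 : cnt (n+1) o =
      (((W n) ×ˢ (Finset.univ : Finset (Fin 5))).filter
        (fun p => (run p.1).bind (fun s => step s p.2) = o)).card := by
    unfold cnt
    rw [W_succ, Finset.filter_image, Finset.card_image_of_injective _ e_inj]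
    congr 1
    apply Finset.filter_congr
    intro p _
    rw [run_snoc]
  rw [h1]
  rw [Finset.card_eq_sum_card_fiberwise
    (f := fun p : List (Fin 5) × Fin 5 => run p.1)
    (t := (Finset.univ : Finset (Option St))) (fun x _ => Finset.mem_univ _)]
  refine Finset.sum_congr rfl fun o' _ => ?_
  have h2 : ((((W n) ×ˢ (Finset.univ : Finset (Fin 5))).filter
        (fun p => (run p.1).bind (fun s => step s p.2) = o)).filter
          (fun p => run p.1 = o')) =
      ((W n).filter (fun w => run w = o')) ×ˢ
        ((Finset.univ : Finset (Fin 5)).filter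
          (fun c => o'.bind (fun s => step s c) = o)) := by
    ext ⟨u, c⟩
    simp only [Finset.mem_filter, Finset.mem_product, Finset.mem_univ, true_and,
      and_true]
    constructor
    · rintro ⟨⟨hu, hQ⟩, ho'⟩
      rw [ho'] at hQ
      exact ⟨⟨hu, ho'⟩, hQ⟩
    · rintro ⟨⟨hu, ho'⟩, hQ⟩
      rw [← ho'] at hQ
      exact ⟨⟨hu, hQ⟩, ho'⟩
  rw [h2, Finset.card_product]
  rfl

lemma univ_option_st :
    (Finset.univ : Finset (Option St)) = {none, some N, some T, some F} := by decide

lemma cnt_succ_N (n : ℕ) :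
    cnt (n+1) (some N) = cnt n (some N) + cnt n (some N) + cnt n (some N) + cnt n (some T) := by
  rw [cnt_succ, univ_option_st]
  rw [Finset.sum_insert (by decide), Finset.sum_insert (by decide),
    Finset.sum_insert (by decide), Finset.sum_singleton]
  rw [show ((Finset.univ : Finset (Fin 5)).filter
    (fun c => (none : Option St).bind (fun s => step s c) = some N)).card = 0 from by decide]
  rw [show ((Finset.univ : Finset (Fin 5)).filter
    (fun c => (some N).bind (fun s => step s c) = some N)).card = 3 from by decide]
  rw [show ((Finset.univ : Finset (Fin 5)).filter
    (fun c => (some T).bind (fun s => step s c) = some N)).card = 1 from by decide]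
  rw [show ((Finset.univ : Finset (Fin 5)).filter
    (fun c => (some F).bind (fun s => step s c) = some N)).card = 0 from by decide]
  ring

lemma cnt_succ_T (n : ℕ) :
    cnt (n+1) (some T) = cnt n (some N) + cnt n (some T) := by
  rw [cnt_succ, univ_option_st]
  rw [Finset.sum_insert (by decide), Finset.sum_insert (by decide),
    Finset.sum_insert (by decide), Finset.sum_singleton]
  rw [show ((Finset.univ : Finset (Fin 5)).filter
    (fun c => (none : Option St).bind (fun s => step s c) = some T)).card = 0 from by decide]
  rw [show ((Finset.univ : Finset (Fin 5)).filter
    (fun c => (some N).bind (fun s => step s c) = some T)).card = 1 from by decide]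
  rw [show ((Finset.univ : Finset (Fin 5)).filter
    (fun c => (some T).bind (fun s => step s c) = some T)).card = 1 from by decide]
  rw [show ((Finset.univ : Finset (Fin 5)).filter
    (fun c => (some F).bind (fun s => step s c) = some T)).card = 0 from by decide]
  ring

lemma cnt_succ_F (n : ℕ) :
    cnt (n+1) (some F) = cnt n (some N) + cnt n (some T) + cnt n (some F) + cnt n (some F) := by
  rw [cnt_succ, univ_option_st]
  rw [Finset.sum_insert (by decide), Finset.sum_insert (by decide),
    Finset.sum_insert (by decide), Finset.sum_singleton]
  rw [show ((Finset.univ : Finset (Fin 5)).filter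
    (fun c => (none : Option St).bind (fun s => step s c) = some F)).card = 0 from by decide]
  rw [show ((Finset.univ : Finset (Fin 5)).filter
    (fun c => (some N).bind (fun s => step s c) = some F)).card = 1 from by decide]
  rw [show ((Finset.univ : Finset (Fin 5)).filter
    (fun c => (some T).bind (fun s => step s c) = some F)).card = 1 from by decide]
  rw [show ((Finset.univ : Finset (Fin 5)).filter
    (fun c => (some F).bind (fun s => step s c) = some F)).card = 2 from by decide]
  ring

lemma cnt_zero_N : cnt 0 (some N) = 1 := by decide
lemma cnt_zero_T : cnt 0 (some T) = 0 := by decide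
lemma cnt_zero_F : cnt 0 (some F) = 0 := by decide

/-- number of good words of length `n` -/
def gcnt (n : ℕ) : ℕ := cnt n (some N) + cnt n (some T) + cnt n (some F)

lemma card_good (n : ℕ) :
    ((W n).filter (fun w => ¬ run w = none)).card = gcnt n := by
  rw [Finset.card_eq_sum_card_fiberwise (f := run)
    (t := ({some N, some T, some F} : Finset (Option St))) ?_]
  · rw [Finset.sum_insert (by decide), Finset.sum_insert (by decide),
      Finset.sum_singleton]
    have key : ∀ o : Option St, o ≠ none →
        (((W n).filter (fun w => ¬ run w = none)).filter (fun w => run w = o)).card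
          = cnt n o := by
      intro o ho
      rw [Finset.filter_filter]
      unfold cnt
      congr 1
      apply Finset.filter_congr
      intro w _
      constructor
      · rintro ⟨-, h⟩; exact h
      · intro h; exact ⟨by rw [h]; exact ho, h⟩
    rw [key _ (by decide), key _ (by decide), key _ (by decide)]
    unfold gcnt
    omega
  · intro w hw
    rw [Finset.mem_coe, Finset.mem_filter] at hw
    cases hr : run w with
    | none => exact absurd hr hw.2
    | some s => cases s <;> simp

/-! ### Power series -/

open PowerSeries

noncomputable def PN : PowerSeries ℤ := PowerSeries.mk fun n => (cnt n (some N) : ℤ)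
noncomputable def PT : PowerSeries ℤ := PowerSeries.mk fun n => (cnt n (some T) : ℤ)
noncomputable def PF : PowerSeries ℤ := PowerSeries.mk fun n => (cnt n (some F) : ℤ)
noncomputable def PA : PowerSeries ℤ := PowerSeries.mk fun n => (gcnt n : ℤ)

lemma relN : PN = 1 + PowerSeries.X * (PN + PN + PN + PT) := by
  ext k
  cases k with
  | zero =>
      simp [PN, PT, cnt_zero_N]
  | succ k =>
      simp only [map_add, PowerSeries.coeff_succ_X_mul, PN, PT, PowerSeries.coeff_mk,
        PowerSeries.coeff_one, Nat.succ_ne_zero, if_false, zero_add]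
      rw [cnt_succ_N]
      push_cast
      ring

lemma relT : PT = PowerSeries.X * (PN + PT) := by
  ext k
  cases k with
  | zero => simp [PN, PT, cnt_zero_T]
  | succ k =>
      simp only [map_add, PowerSeries.coeff_succ_X_mul, PN, PT, PowerSeries.coeff_mk]
      rw [cnt_succ_T]
      push_cast
      ring

lemma relF : PF = PowerSeries.X * (PN + PT + PF + PF) := by
  ext k
  cases k with
  | zero => simp [PN, PT, PF, cnt_zero_F]
  | succ k =>
      simp only [map_add, PowerSeries.coeff_succ_X_mul, PN, PT, PF, PowerSeries.coeff_mk]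
      rw [cnt_succ_F]
      push_cast
      ring

lemma relA : PA = PN + PT + PF := by
  ext k
  simp only [map_add, PA, PN, PT, PF, PowerSeries.coeff_mk, gcnt]
  push_cast
  ring

lemma hN : PN * (1 - 4 * PowerSeries.X + 2 * PowerSeries.X ^ 2)
    = 1 - PowerSeries.X := by
  linear_combination (1 - PowerSeries.X) * relN + PowerSeries.X * relT

lemma hT : PT * (1 - 4 * PowerSeries.X + 2 * PowerSeries.X ^ 2) = PowerSeries.X := by
  linear_combination PowerSeries.X * relN + (1 - 3 * PowerSeries.X) * relT

lemma hF : PF * ((1 - 2 * PowerSeries.X) * (1 - 4 * PowerSeries.X + 2 * PowerSeries.X ^ 2))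
    = PowerSeries.X := by
  linear_combination (1 - 4 * PowerSeries.X + 2 * PowerSeries.X ^ 2) * relF
    + PowerSeries.X * hN + PowerSeries.X * hT

lemma hA : PA * ((1 - 2 * PowerSeries.X) * (1 - 4 * PowerSeries.X + 2 * PowerSeries.X ^ 2))
    = 1 - PowerSeries.X := by
  linear_combination ((1 - 2 * PowerSeries.X) * (1 - 4 * PowerSeries.X + 2 * PowerSeries.X ^ 2)) * relA
    + (1 - 2 * PowerSeries.X) * hN + (1 - 2 * PowerSeries.X) * hT + hF

noncomputable def SS : PowerSeries ℤ := PowerSeries.mk fun k => if 3 ≤ k then 1 else 0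

lemma hS : (1 - PowerSeries.X) * SS = PowerSeries.X ^ 3 := by
  have : (1 - PowerSeries.X) * SS = SS - PowerSeries.X * SS := by ring
  rw [this]
  ext k
  rw [map_sub]
  cases k with
  | zero => simp [SS]
  | succ k =>
      rw [PowerSeries.coeff_succ_X_mul, PowerSeries.coeff_X_pow]
      simp only [SS, PowerSeries.coeff_mk]
      rcases Nat.lt_trichotomy k 2 with h | h | h
      · rw [if_neg (by omega), if_neg (by omega), if_neg (by omega)]
        ring
      · subst h
        norm_num
      · rw [if_pos (by omega), if_pos (by omega), if_neg (by omega)]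
        ring

lemma oneSubX_ne : (1 - PowerSeries.X : PowerSeries ℤ) ≠ 0 := by
  intro h
  have := congrArg (PowerSeries.constantCoeff (R := ℤ)) h
  simp at this

lemma final_ps :
    PA * (1 - 5 * PowerSeries.X + 5 * PowerSeries.X ^ 2 + SS) = 1 := by
  have key : PA * (1 - 5 * PowerSeries.X + 5 * PowerSeries.X ^ 2 + SS) * (1 - PowerSeries.X)
      = 1 * (1 - PowerSeries.X) := by
    linear_combination hA + PA * hS
  exact mul_right_cancel₀ oneSubX_ne key


/-! ### Linear algebra -/

section LA

open scoped Pointwise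

instance : DecidableEq Word5 := inferInstanceAs (DecidableEq (List (Fin 5)))

variable (p : ℕ)

def Gset : Set (FA p) :=
  ({mono p [4, 0], mono p [4, 1], mono p [3, 2], mono p [3, 1], mono p [4, 2]} :
      Set (FA p)) ∪
    {x | ∃ n : ℕ, 0 < n ∧ x = mono p (4 :: (List.replicate n 3 ++ [0]))}

lemma mem_Gset_iff {x : FA p} : x ∈ Gset p ↔ ∃ g ∈ GW, x = mono p g := by
  constructor
  · rintro ((h|h|h|h|h) | ⟨n, hn, h⟩)
    · exact ⟨[4,0], mem_GW_40, h⟩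
    · exact ⟨[4,1], mem_GW_41, h⟩
    · exact ⟨[3,2], mem_GW_32, h⟩
    · exact ⟨[3,1], mem_GW_31, h⟩
    · exact ⟨[4,2], mem_GW_42, h⟩
    · exact ⟨_, mem_GW_family hn, h⟩
  · rintro ⟨g, hg, rfl⟩
    rcases GW_elim hg with rfl | rfl | rfl | rfl | rfl | ⟨n, hn, rfl⟩
    · exact Or.inl (Or.inl rfl)
    · exact Or.inl (Or.inr (Or.inl rfl))
    · exact Or.inl (Or.inr (Or.inr (Or.inl rfl)))
    · exact Or.inl (Or.inr (Or.inr (Or.inr (Or.inl rfl))))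
    · exact Or.inl (Or.inr (Or.inr (Or.inr (Or.inr rfl))))
    · exact Or.inr ⟨n, hn, rfl⟩

def Bset : Set Word5 := {w | Bad (FreeMonoid.toList w)}

lemma twoSidedSpan_eq :
    twoSidedSpan p (Gset p) = (Finsupp.supported (ZMod p) (ZMod p) (Bset)).comap
      ((MonoidAlgebra.coeffLinearEquiv (ZMod p) : FA p ≃ₗ[ZMod p] (Word5 →₀ ZMod p)) : FA p →ₗ[ZMod p] (Word5 →₀ ZMod p)) := by
  apply le_antisymm
  · rw [twoSidedSpan, Submodule.span_le]
    rintro x ⟨a, g, b, hg, rfl⟩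
    obtain ⟨gw, hgw, rfl⟩ := mem_Gset_iff p |>.mp hg
    rw [SetLike.mem_coe, Submodule.mem_comap, Finsupp.mem_supported]
    intro w hw
    rw [Finset.mem_coe] at hw
    change w ∈ (a * mono p gw * b).coeff.support at hw
    have h1 : (a * mono p gw * b).coeff.support ⊆
        a.coeff.support * (mono p gw).coeff.support * b.coeff.support :=
      (MonoidAlgebra.support_coeff_mul_subset _ _).trans
        (Finset.mul_subset_mul_right (MonoidAlgebra.support_coeff_mul_subset a _))
    have h2 := h1 hw
    rw [Finset.mem_mul] at h2
    obtain ⟨u, hu, v, hv, rfl⟩ := h2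
    rw [Finset.mem_mul] at hu
    obtain ⟨a', ha', m, hm, rfl⟩ := hu
    have hm' : m = FreeMonoid.ofList gw := by
      have := Finsupp.support_single_subset hm
      rwa [Finset.mem_singleton] at this
    refine ⟨gw, hgw, FreeMonoid.toList a', FreeMonoid.toList v, ?_⟩
    show FreeMonoid.toList a' ++ gw ++ FreeMonoid.toList v = FreeMonoid.toList (a' * m * v)
    rw [hm', FreeMonoid.toList_mul, FreeMonoid.toList_mul, FreeMonoid.toList_ofList]
  · rw [Submodule.comap_equiv_eq_map_symm, Finsupp.supported_eq_span_single,
      Submodule.map_span, Submodule.span_le]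
    rintro x ⟨_, ⟨w, hw, rfl⟩, rfl⟩
    obtain ⟨g, hg, s, t, hst⟩ := hw
    apply Submodule.subset_span
    refine ⟨MonoidAlgebra.single (FreeMonoid.ofList s) 1, mono p g,
      MonoidAlgebra.single (FreeMonoid.ofList t) 1,
      (mem_Gset_iff p).mpr ⟨g, hg, rfl⟩, ?_⟩
    show MonoidAlgebra.single w 1 = _
    rw [mono, MonoidAlgebra.single_mul_single, MonoidAlgebra.single_mul_single]
    rw [one_mul, one_mul]
    congr 1
    rw [← FreeMonoid.ofList_append, ← FreeMonoid.ofList_append, hst,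
      FreeMonoid.ofList_toList]

lemma homComponent_eq (n : ℕ) :
    homComponent p n = (Finsupp.supported (ZMod p) (ZMod p)
      {w : Word5 | (FreeMonoid.toList w).length = n}).comap ((MonoidAlgebra.coeffLinearEquiv (ZMod p) : FA p ≃ₗ[ZMod p] (Word5 →₀ ZMod p)) : FA p →ₗ[ZMod p] (Word5 →₀ ZMod p)) := by
  rw [Submodule.comap_equiv_eq_map_symm, Finsupp.supported_eq_span_single, Submodule.map_span,
    homComponent]
  congr 1
  ext x
  constructor
  · rintro ⟨w, hw, rfl⟩
    exact ⟨_, ⟨w, hw, rfl⟩, rfl⟩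
  · rintro ⟨_, ⟨w, hw, rfl⟩, rfl⟩
    exact ⟨w, hw, rfl⟩


def goodS (n : ℕ) : Set Word5 :=
  {w | (FreeMonoid.toList w).length = n ∧ ¬ Bad (FreeMonoid.toList w)}

def goodFin (n : ℕ) : Finset (List (Fin 5)) := (W n).filter (fun w => ¬ run w = none)

lemma card_goodFin (n : ℕ) : (goodFin n).card = gcnt n := card_good n

def goodEquiv (n : ℕ) : goodS n ≃ {l : List (Fin 5) // l ∈ goodFin n} where
  toFun w := ⟨FreeMonoid.toList w.1, by
    obtain ⟨h1, h2⟩ := w.2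
    simp only [goodFin, Finset.mem_filter, mem_W]
    exact ⟨h1, fun hn => h2 ((run_eq_none_iff_bad _).mp hn)⟩⟩
  invFun l := ⟨FreeMonoid.ofList l.1, by
    have hl := l.2
    simp only [goodFin, Finset.mem_filter, mem_W] at hl
    refine ⟨by rw [FreeMonoid.toList_ofList]; exact hl.1, ?_⟩
    rw [FreeMonoid.toList_ofList]
    exact fun hb => hl.2 ((run_eq_none_iff_bad _).mpr hb)⟩
  left_inv w := Subtype.ext (FreeMonoid.ofList_toList _)
  right_inv l := Subtype.ext (FreeMonoid.toList_ofList _)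

lemma bcoef_eq (hp : p.Prime) (n : ℕ) :
    bcoef p (twoSidedSpan p (Gset p)) n = gcnt n := by
  haveI : Fact p.Prime := ⟨hp⟩
  haveI : Fintype (goodS n) := Fintype.ofEquiv _ (goodEquiv n).symm
  let φ : ↥(homComponent p n) →ₗ[ZMod p] ((goodS n) →₀ ZMod p) :=
    (Finsupp.lsubtypeDomain (goodS n)).comp ((((MonoidAlgebra.coeffLinearEquiv (ZMod p) : FA p ≃ₗ[ZMod p] (Word5 →₀ ZMod p)) : FA p →ₗ[ZMod p] (Word5 →₀ ZMod p))).comp (homComponent p n).subtype)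
  have hker : LinearMap.ker φ = (twoSidedSpan p (Gset p)).comap (homComponent p n).subtype := by
    ext x
    rw [LinearMap.mem_ker, Submodule.mem_comap]
    have hx : ↑(x : FA p).coeff.support ⊆ {w : Word5 | (FreeMonoid.toList w).length = n} :=
      (Finsupp.mem_supported _ _).mp (Submodule.mem_comap.mp ((le_of_eq (homComponent_eq p n)) x.2))
    show Finsupp.subtypeDomain _ (x : FA p).coeff = 0 ↔ (x : FA p) ∈ twoSidedSpan p (Gset p)
    rw [Finsupp.subtypeDomain_eq_zero_iff', twoSidedSpan_eq, Submodule.mem_comap,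
      Finsupp.mem_supported]
    simp only [LinearEquiv.coe_coe, MonoidAlgebra.coeffLinearEquiv_apply]
    constructor
    · intro h w hw
      rw [Finset.mem_coe, Finsupp.mem_support_iff] at hw
      by_contra hbad
      exact hw (h w ⟨hx (Finsupp.mem_support_iff.mpr hw), hbad⟩)
    · intro h w hwg
      by_contra hne
      exact hwg.2 (h (Finsupp.mem_support_iff.mpr hne))
  have hsurj : Function.Surjective φ := by
    intro g
    refine ⟨⟨MonoidAlgebra.ofCoeff (Finsupp.embDomain (Function.Embedding.subtype _) g), ?_⟩, ?_⟩
    · rw [homComponent_eq, Submodule.mem_comap]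
      simp only [LinearEquiv.coe_coe, MonoidAlgebra.coeffLinearEquiv_apply,
        MonoidAlgebra.coeff_ofCoeff]
      rw [Finsupp.mem_supported, Finsupp.support_embDomain]
      intro w hw
      rw [Finset.coe_map] at hw
      obtain ⟨a, -, rfl⟩ := hw
      exact a.2.1
    · ext a
      show Finsupp.subtypeDomain _ (MonoidAlgebra.coeff (MonoidAlgebra.ofCoeff _)) a = g a
      rw [MonoidAlgebra.coeff_ofCoeff, Finsupp.subtypeDomain_apply]
      exact Finsupp.embDomain_apply_self (Function.Embedding.subtype _) g a
  have e := LinearMap.quotKerEquivOfSurjective φ hsurj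
  rw [hker] at e
  rw [bcoef, e.finrank_eq, Module.finrank_finsupp_self]
  rw [Fintype.card_congr (goodEquiv n), Fintype.card_coe]
  exact card_goodFin n

end LA

end S13

/-- (Section 2.1 example, Poincaré series.)  Let `C` be the two-sided ideal of
`A = 𝔽_p⟨X_1, …, X_5⟩` generated by `X_5X_1, X_5X_2, X_4X_3, X_4X_2, X_5X_3` and
`X_5 X_4^n X_1` for all `n ≥ 1`.  With `b n = dim_{𝔽_p}(A^{(n)}/(C ∩ A^{(n)}))`, one
has `(∑ b_n t^n) · (1 − 5t + 5t² + ∑_{k ≥ 3} t^k) = 1` in `ℤ⟦t⟧`; equivalently, the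
Poincaré series of `A/C` is `(1 − 5t + 5t² + t³(1 + t + t² + ⋯))⁻¹`. -/
theorem stmt_13 (p : ℕ) (hp : p.Prime) :
    (PowerSeries.mk fun n =>
        (bcoef p (twoSidedSpan p
          (({mono p [4, 0], mono p [4, 1], mono p [3, 2], mono p [3, 1], mono p [4, 2]} :
              Set (FA p)) ∪
            {x | ∃ n : ℕ, 0 < n ∧ x = mono p (4 :: (List.replicate n 3 ++ [0]))})) n : ℤ)) *
      (1 - 5 * PowerSeries.X + 5 * PowerSeries.X ^ 2 +
        PowerSeries.mk fun k => if 3 ≤ k then 1 else 0) = 1 := by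
  have h1 : (PowerSeries.mk fun n =>
        (bcoef p (twoSidedSpan p
          (({mono p [4, 0], mono p [4, 1], mono p [3, 2], mono p [3, 1], mono p [4, 2]} :
              Set (FA p)) ∪
            {x | ∃ n : ℕ, 0 < n ∧ x = mono p (4 :: (List.replicate n 3 ++ [0]))})) n : ℤ)) =
      S13.PA := by
    ext k
    rw [PowerSeries.coeff_mk, S13.PA, PowerSeries.coeff_mk]
    exact_mod_cast S13.bcoef_eq p hp k
  rw [h1]
  exact S13.final_ps
end
end
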